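/- arXiv:2405.12317 — 4 statements merged into one kernel-verified Lean document; each statement's English description precedes it below -/
import Mathlib

section
/- Let A and Â be compact self-adjoint operators on a Hilbert space H with nonincreasing eigenvalues {λ_i}, {λ̂_i}. Fix a nonzero eigenvalue λ_i of A with eigenvalue-index set I = {t : λ_t = λ_i}, and let δ_i = min_{j ∉ I} |λ_i − λ_j|. Let P_I and P̂_I be the orthogonal projections onto the span of eigenvectors of A and Â with indices in I. If δ_i ≥ ℓ > 0 and ‖A − Â‖ < ℓ/4, then ‖P_I − P̂_I‖ ≤ (8/ℓ) · ‖A − Â‖. -/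
open Module Submodule

noncomputable section

namespace SpecPerturbAux

variable {H : Type*} [NormedAddCommGroup H] [InnerProductSpace ℂ H]

local notation "⟪" x ", " y "⟫" => @inner ℂ _ _ x y

/-- decomposition of an element of a (bi-)iSup of eigenspaces, with norm identities. -/
lemma exists_finsupp_decomp (T : H →L[ℂ] H) (hT : (T : H →ₗ[ℂ] H).IsSymmetric)
    (S : Set ℂ) (lam : ℂ) {x : H}
    (hx : x ∈ ⨆ μ ∈ S, Module.End.eigenspace (T : H →ₗ[ℂ] H) μ) :
    ∃ f : ℂ →₀ H, (∀ μ, f μ ∈ Module.End.eigenspace (T : H →ₗ[ℂ] H) μ) ∧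
      (∀ μ, f μ ≠ 0 → μ ∈ S) ∧ x = ∑ μ ∈ f.support, f μ ∧
      ‖x‖ ^ 2 = ∑ μ ∈ f.support, ‖f μ‖ ^ 2 ∧
      ‖T x - lam • x‖ ^ 2 = ∑ μ ∈ f.support, ‖μ - lam‖ ^ 2 * ‖f μ‖ ^ 2 ∧
      T x - lam • x = ∑ μ ∈ f.support, (μ - lam) • f μ := by
  rw [Submodule.mem_iSup_iff_exists_finsupp] at hx
  obtain ⟨f, hf, hsum⟩ := hx
  have hmem : ∀ μ, f μ ∈ Module.End.eigenspace (T : H →ₗ[ℂ] H) μ := by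
    intro μ
    by_cases h : μ ∈ S
    · have := hf μ; rwa [iSup_pos h] at this
    · have := hf μ; rw [iSup_neg h] at this
      simp only [Submodule.mem_bot] at this
      simp [this]
  have hS : ∀ μ, f μ ≠ 0 → μ ∈ S := by
    intro μ hne
    by_contra h
    have := hf μ; rw [iSup_neg h] at this
    simp only [Submodule.mem_bot] at this
    exact hne this
  have hxsum : x = ∑ μ ∈ f.support, f μ := by
    rw [← hsum]; rfl
  -- norm of x
  have hnx : ‖x‖ ^ 2 = ∑ μ ∈ f.support, ‖f μ‖ ^ 2 := by
    have := hT.orthogonalFamily_eigenspaces.norm_sum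
      (fun μ => (⟨f μ, hmem μ⟩ : Module.End.eigenspace (T : H →ₗ[ℂ] H) μ)) f.support
    simpa [hxsum] using this
  -- image
  have himg : T x - lam • x = ∑ μ ∈ f.support, (μ - lam) • f μ := by
    rw [hxsum, map_sum, Finset.smul_sum, ← Finset.sum_sub_distrib]
    refine Finset.sum_congr rfl fun μ _ => ?_
    have : T (f μ) = μ • f μ := by
      have := hmem μ; rwa [Module.End.mem_eigenspace_iff] at this
    rw [this, sub_smul]
  have hni : ‖T x - lam • x‖ ^ 2 = ∑ μ ∈ f.support, ‖μ - lam‖ ^ 2 * ‖f μ‖ ^ 2 := by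
    have := hT.orthogonalFamily_eigenspaces.norm_sum
      (fun μ => (⟨(μ - lam) • f μ,
        Submodule.smul_mem _ _ (hmem μ)⟩ : Module.End.eigenspace (T : H →ₗ[ℂ] H) μ)) f.support
    rw [himg]
    simpa [norm_smul, mul_pow] using this
  exact ⟨f, hmem, hS, hxsum, hnx, hni, himg⟩


/-- Upper bound on the iSup of eigenspaces. -/
lemma norm_le_of_mem_iSup (T : H →L[ℂ] H) (hT : (T : H →ₗ[ℂ] H).IsSymmetric)
    (S : Set ℂ) (lam : ℂ) {c : ℝ} (hc : 0 ≤ c)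
    (hS : ∀ μ ∈ S, ‖μ - lam‖ ≤ c) {x : H}
    (hx : x ∈ ⨆ μ ∈ S, Module.End.eigenspace (T : H →ₗ[ℂ] H) μ) :
    ‖T x - lam • x‖ ≤ c * ‖x‖ := by
  obtain ⟨f, hmem, hfS, hxs, hnx, hni, -⟩ := exists_finsupp_decomp T hT S lam hx
  have hsq : ‖T x - lam • x‖ ^ 2 ≤ (c * ‖x‖) ^ 2 := by
    rw [hni, mul_pow, hnx, Finset.mul_sum]
    refine Finset.sum_le_sum fun μ hμ => ?_
    have hμS : μ ∈ S := hfS μ (Finsupp.mem_support_iff.mp hμ)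
    have := hS μ hμS
    exact mul_le_mul_of_nonneg_right (by nlinarith [norm_nonneg (μ - lam)])
      (by positivity)
  exact (pow_le_pow_iff_left₀ (norm_nonneg _) (mul_nonneg hc (norm_nonneg x))
    two_ne_zero).mp hsq

/-- Lower bound on the closure of the iSup of eigenspaces. -/
lemma le_norm_of_mem_closure_iSup (T : H →L[ℂ] H) (hT : (T : H →ₗ[ℂ] H).IsSymmetric)
    (S : Set ℂ) (lam : ℂ) {c : ℝ} (hc : 0 ≤ c)
    (hS : ∀ μ ∈ S, Module.End.HasEigenvalue (T : H →ₗ[ℂ] H) μ → c ≤ ‖μ - lam‖) {x : H}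
    (hx : x ∈ (⨆ μ ∈ S, Module.End.eigenspace (T : H →ₗ[ℂ] H) μ).topologicalClosure) :
    c * ‖x‖ ≤ ‖T x - lam • x‖ := by
  have hcl : (((⨆ μ ∈ S, Module.End.eigenspace (T : H →ₗ[ℂ] H) μ) : Submodule ℂ H) : Set H)
      ⊆ {y : H | c * ‖y‖ ≤ ‖T y - lam • y‖} := by
    intro y hy
    obtain ⟨f, hmem, hfS, hxs, hnx, hni, -⟩ := exists_finsupp_decomp T hT S lam hy
    have hsq : (c * ‖y‖) ^ 2 ≤ ‖T y - lam • y‖ ^ 2 := by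
      rw [hni, mul_pow, hnx, Finset.mul_sum]
      refine Finset.sum_le_sum fun μ hμ => ?_
      have hfne : f μ ≠ 0 := Finsupp.mem_support_iff.mp hμ
      have hμS : μ ∈ S := hfS μ hfne
      have hev : Module.End.HasEigenvalue (T : H →ₗ[ℂ] H) μ :=
        Module.End.hasEigenvalue_of_hasEigenvector ⟨hmem μ, hfne⟩
      have := hS μ hμS hev
      exact mul_le_mul_of_nonneg_right (by nlinarith [norm_nonneg (μ - lam)])
        (by positivity)
    exact (pow_le_pow_iff_left₀ (mul_nonneg hc (norm_nonneg y)) (norm_nonneg _)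
      two_ne_zero).mp hsq
  have hclosed : IsClosed {y : H | c * ‖y‖ ≤ ‖T y - lam • y‖} := by
    apply isClosed_le
    · exact (continuous_const.mul continuous_norm)
    · exact ((T.continuous.sub (continuous_const_smul lam)).norm)
  have hx' : x ∈ closure ((⨆ μ ∈ S, Module.End.eigenspace (T : H →ₗ[ℂ] H) μ : Submodule ℂ H) :
      Set H) := by
    rw [← Submodule.topologicalClosure_coe]; exact hx
  exact hclosed.closure_subset_iff.mpr hcl hx'


variable [CompleteSpace H]

/-- A compact symmetric operator on a nontrivial complex Hilbert space has an eigenvector. -/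
lemma exists_eigenvector_of_compact [Nontrivial H] (T : H →L[ℂ] H)
    (hsym : (T : H →ₗ[ℂ] H).IsSymmetric) (hc : IsCompactOperator T) :
    ∃ (μ : ℂ) (x : H), x ≠ 0 ∧ T x = μ • x := by
  by_cases hT0 : T = 0
  · obtain ⟨x, hx⟩ := exists_ne (0 : H)
    exact ⟨0, x, hx, by simp [hT0]⟩
  set a : ℝ := ‖T‖ with ha_def
  have ha : (0:ℝ) < a := by
    rcases (norm_nonneg T).lt_or_eq with h | h
    · exact h
    · exact absurd (norm_eq_zero.mp h.symm) hT0
  -- a sequence of unit vectors almost attaining the norm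
  have hseq : ∀ n : ℕ, ∃ x : H, ‖x‖ = 1 ∧ a * (1 - 1/(n+1)) < ‖T x‖ := by
    intro n
    have h1 : (0:ℝ) < 1/((n:ℝ)+1) := by positivity
    have hlt : a * (1 - 1/((n:ℝ)+1)) < ‖T‖ := by nlinarith
    obtain ⟨x, hx1, hx2⟩ := T.exists_lt_apply_of_lt_opNorm hlt
    have hb : (0:ℝ) ≤ a * (1 - 1/((n:ℝ)+1)) := by
      have h2 : 1/((n:ℝ)+1) ≤ 1 := by
        rw [div_le_one (by positivity)]; linarith [Nat.cast_nonneg (α := ℝ) n]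
      nlinarith
    have hx0 : x ≠ 0 := by
      rintro rfl
      simp only [map_zero, norm_zero] at hx2
      linarith
    have hxn : (0:ℝ) < ‖x‖ := norm_pos_iff.mpr hx0
    refine ⟨((‖x‖ : ℂ))⁻¹ • x, ?_, ?_⟩
    · rw [norm_smul, norm_inv, Complex.norm_real, Real.norm_eq_abs, abs_of_pos hxn,
        inv_mul_cancel₀ hxn.ne']
    · rw [map_smul, norm_smul, norm_inv, Complex.norm_real, Real.norm_eq_abs,
        abs_of_pos hxn]
      calc a * (1 - 1/((n:ℝ)+1)) < ‖T x‖ := hx2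
        _ = 1 * ‖T x‖ := (one_mul _).symm
        _ ≤ ‖x‖⁻¹ * ‖T x‖ := by
            have h1x : (1:ℝ) ≤ ‖x‖⁻¹ := by
              nlinarith [mul_inv_cancel₀ hxn.ne', inv_pos.mpr hxn, hx1]
            exact mul_le_mul_of_nonneg_right h1x (norm_nonneg _)
  choose xs hxs1 hxs2 using hseq
  have hTxle : ∀ n, ‖T (xs n)‖ ≤ a := fun n => by
    simpa [hxs1 n] using T.le_opNorm (xs n)
  have htend : Filter.Tendsto (fun n => ‖T (xs n)‖) Filter.atTop (nhds a) := by
    have hlow : Filter.Tendsto (fun n : ℕ => a * (1 - 1/((n:ℝ)+1))) Filter.atTop (nhds a) := by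
      have := tendsto_one_div_add_atTop_nhds_zero_nat (𝕜 := ℝ)
      have h2 := ((tendsto_const_nhds (x := (1:ℝ))).sub this).const_mul a
      simpa using h2
    exact tendsto_of_tendsto_of_tendsto_of_le_of_le hlow tendsto_const_nhds
      (fun n => (hxs2 n).le) hTxle
  -- extract a convergent subsequence of T (xs n)
  have hKcpt : IsCompact (closure (T '' Metric.closedBall 0 1)) :=
    hc.isCompact_closure_image_closedBall 1
  have hmem : ∀ n, T (xs n) ∈ closure (T '' Metric.closedBall 0 1) := fun n =>
    subset_closure (Set.mem_image_of_mem _ (by simp [Metric.mem_closedBall, hxs1 n]))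
  obtain ⟨y, -, φ, hφ, hyt⟩ := hKcpt.tendsto_subseq hmem
  set c : ℂ := ((a:ℂ))^2 with hc_def
  have hcne : c ≠ 0 := pow_ne_zero _ (by exact_mod_cast ha.ne')
  have h2 : Filter.Tendsto (fun n => T (T (xs (φ n)))) Filter.atTop (nhds (T y)) :=
    (T.continuous.tendsto y).comp hyt
  have hml : Filter.Tendsto (fun n => ‖T (xs (φ n))‖) Filter.atTop (nhds a) :=
    htend.comp hφ.tendsto_atTop
  -- the key quantitative estimate
  have hbound : ∀ n, ‖T (T (xs (φ n))) - c • xs (φ n)‖^2 ≤ a^4 - a^2 * ‖T (xs (φ n))‖^2 := by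
    intro n
    set u := xs (φ n) with hu
    set v := T u with hv
    have hvinner : ⟪T v, u⟫ = ((‖v‖:ℂ))^2 := by
      have h1 : ⟪T v, u⟫ = ⟪v, T u⟫ := hsym v u
      rw [h1, ← hv, inner_self_eq_norm_sq_to_K]
      norm_num
    have hre : RCLike.re ⟪T v, c • u⟫ = a^2 * ‖v‖^2 := by
      rw [inner_smul_right, hvinner, hc_def]
      simp [← Complex.ofReal_pow, ← Complex.ofReal_mul]
    have hcu : ‖c • u‖^2 = a^4 := by
      rw [norm_smul, hc_def, norm_pow, Complex.norm_real, Real.norm_eq_abs,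
        abs_of_pos ha, hxs1 (φ n), mul_one]
      ring
    have hTv : ‖T v‖ ≤ a * ‖v‖ := T.le_opNorm v
    have hexp := @norm_sub_sq ℂ _ _ _ _ (T v) (c • u)
    rw [hexp, hre, hcu]
    have hTv2 : ‖T v‖^2 ≤ a^2 * ‖v‖^2 := by nlinarith [norm_nonneg (T v), norm_nonneg v]
    nlinarith [norm_nonneg v]
  have hdiff : Filter.Tendsto (fun n => T (T (xs (φ n))) - c • xs (φ n))
      Filter.atTop (nhds 0) := by
    apply tendsto_zero_iff_norm_tendsto_zero.mpr
    have hg : Filter.Tendsto (fun n => a^4 - a^2 * ‖T (xs (φ n))‖^2) Filter.atTop (nhds 0) := by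
      have := (tendsto_const_nhds (x := a^4)).sub ((hml.pow 2).const_mul (a^2))
      have h0 : a^4 - a^2 * a^2 = 0 := by ring
      rwa [h0] at this
    have hsq : Filter.Tendsto (fun n => ‖T (T (xs (φ n))) - c • xs (φ n)‖^2)
        Filter.atTop (nhds 0) :=
      squeeze_zero (fun n => by positivity) hbound hg
    have := (Real.continuous_sqrt.tendsto 0).comp hsq
    rw [Real.sqrt_zero] at this
    refine this.congr fun n => ?_
    exact Real.sqrt_sq (norm_nonneg _)
  set z : H := c⁻¹ • T y with hz_def
  have hxz : Filter.Tendsto (fun n => xs (φ n)) Filter.atTop (nhds z) := by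
    have h3 : Filter.Tendsto (fun n => c • xs (φ n)) Filter.atTop (nhds (T y)) := by
      have := h2.sub hdiff
      simpa using this
    have h4 := h3.const_smul c⁻¹
    have h5 : (fun n => c⁻¹ • (c • xs (φ n))) = fun n => xs (φ n) :=
      funext fun n => inv_smul_smul₀ hcne _
    rw [show (fun n => c⁻¹ • (c • xs (φ n))) = fun n => xs (φ n) from h5] at h4
    exact h4
  have hz1 : ‖z‖ = 1 := by
    have hnt : Filter.Tendsto (fun n => ‖xs (φ n)‖) Filter.atTop (nhds ‖z‖) :=
      (continuous_norm.tendsto z).comp hxz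
    have hone : Filter.Tendsto (fun _ : ℕ => (1:ℝ)) Filter.atTop (nhds 1) := tendsto_const_nhds
    refine tendsto_nhds_unique (hnt.congr fun n => ?_) hone
    exact (hxs1 (φ n))
  have hz0 : z ≠ 0 := fun h => by rw [h, norm_zero] at hz1; norm_num at hz1
  have hTz : T (T z) = c • z := by
    have hA : Filter.Tendsto (fun n => T (T (xs (φ n)))) Filter.atTop (nhds (T (T z))) :=
      ((T.continuous.tendsto (T z)).comp ((T.continuous.tendsto z).comp hxz))
    have hB : Filter.Tendsto (fun n => T (T (xs (φ n)))) Filter.atTop (nhds (c • z)) := by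
      have := hdiff.add (hxz.const_smul c)
      simpa using this
    exact tendsto_nhds_unique hA hB
  by_cases hw : T z + (a:ℂ) • z = 0
  · refine ⟨-(a:ℂ), z, hz0, ?_⟩
    rw [neg_smul, eq_neg_of_add_eq_zero_left hw]
  · refine ⟨(a:ℂ), T z + (a:ℂ) • z, hw, ?_⟩
    have e2 := T.map_add (T z) ((a:ℂ) • z)
    have e3 : T ((a:ℂ) • z) = (a:ℂ) • T z := T.map_smul (a:ℂ) z
    rw [e2, e3, hTz, hc_def]
    module


/-- Spectral completeness: eigenvectors of a compact symmetric operator span a dense subspace. -/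
lemma orthogonal_iSup_eigenspaces_eq_bot (T : H →L[ℂ] H)
    (hsym : (T : H →ₗ[ℂ] H).IsSymmetric) (hc : IsCompactOperator T) :
    (⨆ μ : ℂ, Module.End.eigenspace (T : H →ₗ[ℂ] H) μ)ᗮ = ⊥ := by
  set W : Submodule ℂ H := (⨆ μ : ℂ, Module.End.eigenspace (T : H →ₗ[ℂ] H) μ)ᗮ with hW
  rw [Submodule.eq_bot_iff]
  by_contra hne
  push_neg at hne
  obtain ⟨y, hyW, hy0⟩ := hne
  haveI : Nontrivial W := ⟨⟨⟨y, hyW⟩, 0, by simp [Subtype.ext_iff, hy0]⟩⟩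
  haveI : CompleteSpace W := (Submodule.isClosed_orthogonal _).completeSpace_coe
  have hinv : ∀ v ∈ W, (T : H →ₗ[ℂ] H) v ∈ W := fun v hv =>
    hsym.orthogonalComplement_iSup_eigenspaces_invariant hv
  let Tres : W →ₗ[ℂ] W := (T : H →ₗ[ℂ] H).restrict hinv
  have hcres : IsCompactOperator Tres := by
    have h0 : IsCompactOperator ((T : H →ₗ[ℂ] H) : H → H) := hc
    exact h0.restrict' hinv
  let TW : W →L[ℂ] W := ⟨Tres, hcres.continuous⟩
  have hsymW : ((TW : W →L[ℂ] W) : W →ₗ[ℂ] W).IsSymmetric := by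
    intro u v
    exact hsym (u : H) (v : H)
  obtain ⟨μ, x, hx0, hTx⟩ := exists_eigenvector_of_compact TW hsymW hcres
  have hxE : (x : H) ∈ Module.End.eigenspace (T : H →ₗ[ℂ] H) μ := by
    rw [Module.End.mem_eigenspace_iff]
    have h1 : ((TW x : W) : H) = (T : H →ₗ[ℂ] H) (x : H) := rfl
    rw [← h1, hTx]
    rfl
  have hxS : (x : H) ∈ ⨆ μ : ℂ, Module.End.eigenspace (T : H →ₗ[ℂ] H) μ :=
    (le_iSup (fun μ => Module.End.eigenspace (T : H →ₗ[ℂ] H) μ) μ) hxE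
  have hzero : ((x : H)) = 0 := by
    have h2 := (Submodule.mem_orthogonal _ _).mp x.2
    have h3 := h2 (x : H) hxS
    rwa [inner_self_eq_zero] at h3
  exact hx0 (Subtype.ext hzero)


/-- Lower bound for `T - lam` on the orthogonal complement of a collection of eigenspaces. -/
lemma le_norm_of_mem_orthogonal_iSup (T : H →L[ℂ] H)
    (hsym : (T : H →ₗ[ℂ] H).IsSymmetric) (hc : IsCompactOperator T)
    (S : Set ℂ) (lam : ℂ) {c : ℝ} (hc0 : 0 ≤ c)
    (hS : ∀ μ, μ ∉ S → Module.End.HasEigenvalue (T : H →ₗ[ℂ] H) μ → c ≤ ‖μ - lam‖)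
    {y : H} (hy : y ∈ (⨆ μ ∈ S, Module.End.eigenspace (T : H →ₗ[ℂ] H) μ)ᗮ) :
    c * ‖y‖ ≤ ‖T y - lam • y‖ := by
  set E := fun μ : ℂ => Module.End.eigenspace (T : H →ₗ[ℂ] H) μ with hE
  set M : Submodule ℂ H := ⨆ μ ∈ S, E μ with hM
  set V : Submodule ℂ H := (⨆ μ ∈ Sᶜ, E μ).topologicalClosure with hV
  have horth : ∀ {μ ν : ℂ}, μ ≠ ν → E μ ≤ (E ν)ᗮ := by
    intro μ ν hne w hw
    rw [Submodule.mem_orthogonal]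
    intro u hu
    exact hsym.orthogonalFamily_eigenspaces hne.symm ⟨u, hu⟩ ⟨w, hw⟩
  have hEM : ∀ ν ∉ S, E ν ≤ Mᗮ := by
    intro ν hν
    have h1 : M = ⨆ μ : S, E ↑μ := by rw [hM, iSup_subtype']
    rw [h1, ← Submodule.iInf_orthogonal]
    exact le_iInf fun μ => horth (fun h => hν (h ▸ μ.2))
  have hVM : V ≤ Mᗮ := by
    exact Submodule.topologicalClosure_minimal _ (iSup₂_le fun ν hν => hEM ν hν)
      (Submodule.isClosed_orthogonal _)
  haveI : CompleteSpace V := (Submodule.isClosed_topologicalClosure _).completeSpace_coe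
  obtain ⟨v, hvV, w, hwVp, hyvw⟩ := Submodule.exists_add_mem_mem_orthogonal (K := V) y
  have hwM : w ∈ Mᗮ := by
    have : w = y - v := by rw [hyvw]; abel
    rw [this]
    exact Submodule.sub_mem _ hy (hVM hvV)
  have hwbot : w ∈ (⨆ μ : ℂ, E μ)ᗮ := by
    rw [← Submodule.iInf_orthogonal]
    refine Submodule.mem_iInf _ |>.mpr fun μ => ?_
    by_cases hμ : μ ∈ S
    · exact (Submodule.orthogonal_le (le_iSup₂ (f := fun μ _ => E μ) μ hμ)) hwM
    · have hEV : E μ ≤ V :=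
        le_trans (le_iSup₂ (f := fun μ _ => E μ) μ hμ) (Submodule.le_topologicalClosure _)
      exact (Submodule.orthogonal_le hEV) hwVp
  have hw0 : w = 0 := by
    rw [orthogonal_iSup_eigenspaces_eq_bot T hsym hc] at hwbot
    simpa using hwbot
  have hyV : y ∈ V := by
    rw [hyvw, hw0, add_zero]; exact hvV
  have := le_norm_of_mem_closure_iSup T hsym Sᶜ lam hc0
    (fun μ hμ hev => hS μ hμ hev) hyV
  exact this


section ProjLemmas

variable (P : H →L[ℂ] H)

lemma proj_fix (hP : IsIdempotentElem P) {z : H}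
    (hz : z ∈ LinearMap.range (P : H →ₗ[ℂ] H)) : P z = z := by
  obtain ⟨u, rfl⟩ := hz
  simp only [ContinuousLinearMap.coe_coe]
  rw [← ContinuousLinearMap.mul_apply, hP]

lemma proj_kill (hP : IsIdempotentElem P) (hPsa : IsSelfAdjoint P) {y : H}
    (hy : y ∈ (LinearMap.range (P : H →ₗ[ℂ] H))ᗮ) : P y = 0 := by
  have hsymP := hPsa.isSymmetric
  have h1 : ⟪P y, P y⟫ = ⟪y, P (P y)⟫ := hsymP y (P y)
  have h2 : P (P y) = P y := by rw [← ContinuousLinearMap.mul_apply, hP]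
  rw [h2] at h1
  have h3 : ⟪y, P y⟫ = 0 :=
    (Submodule.mem_orthogonal' _ _).mp hy (P y) ⟨y, rfl⟩
  rw [h3] at h1
  exact inner_self_eq_zero.mp h1

lemma sub_proj_mem_orthogonal (hP : IsIdempotentElem P) (hPsa : IsSelfAdjoint P) (x : H) :
    x - P x ∈ (LinearMap.range (P : H →ₗ[ℂ] H))ᗮ := by
  have hsymP := hPsa.isSymmetric
  rw [Submodule.mem_orthogonal]
  intro u hu
  rw [inner_sub_right]
  have h1 : ⟪u, P x⟫ = ⟪u, x⟫ := by
    have h2 := (hsymP u x).symm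
    simp only [ContinuousLinearMap.coe_coe] at h2
    rw [h2, proj_fix P hP hu]
  rw [h1, sub_self]

lemma proj_pythagoras (hP : IsIdempotentElem P) (hPsa : IsSelfAdjoint P) (x : H) :
    ‖P x‖^2 + ‖x - P x‖^2 = ‖x‖^2 := by
  have h0 : ⟪P x, x - P x⟫ = 0 :=
    (Submodule.mem_orthogonal _ _).mp (sub_proj_mem_orthogonal P hP hPsa x) (P x) ⟨x, rfl⟩
  have h2 : P x + (x - P x) = x := add_sub_cancel _ _
  have h3 := norm_add_sq (𝕜 := ℂ) (P x) (x - P x)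
  rw [h2, h0] at h3
  simp only [map_zero, mul_zero, add_zero, zero_add] at h3
  linarith

lemma proj_norm_le (hP : IsIdempotentElem P) (hPsa : IsSelfAdjoint P) (x : H) :
    ‖P x‖ ≤ ‖x‖ := by
  have := proj_pythagoras P hP hPsa x
  nlinarith [norm_nonneg (P x), norm_nonneg x, sq_nonneg ‖x - P x‖, norm_nonneg (x - P x)]

lemma sub_proj_norm_le (hP : IsIdempotentElem P) (hPsa : IsSelfAdjoint P) (x : H) :
    ‖x - P x‖ ≤ ‖x‖ := by
  have := proj_pythagoras P hP hPsa x
  nlinarith [norm_nonneg (P x), norm_nonneg x, sq_nonneg ‖P x‖, norm_nonneg (x - P x)]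

lemma proj_comm (hP : IsIdempotentElem P) (hPsa : IsSelfAdjoint P) (B : H →L[ℂ] H)
    (hBsym : (B : H →ₗ[ℂ] H).IsSymmetric)
    (hinv : ∀ z ∈ LinearMap.range (P : H →ₗ[ℂ] H), B z ∈ LinearMap.range (P : H →ₗ[ℂ] H))
    (u : H) : P (B u) = B (P u) := by
  have h1 : B u = B (P u) + B (u - P u) := by rw [← map_add]; congr 1; abel
  have h2 : P (B (P u)) = B (P u) := proj_fix P hP (hinv _ ⟨u, rfl⟩)
  have h3 : B (u - P u) ∈ (LinearMap.range (P : H →ₗ[ℂ] H))ᗮ := by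
    rw [Submodule.mem_orthogonal]
    intro z hz
    have hsz := hBsym z (u - P u)
    simp only [ContinuousLinearMap.coe_coe] at hsz
    rw [← hsz]
    exact (Submodule.mem_orthogonal _ _).mp
      (sub_proj_mem_orthogonal P hP hPsa u) _ (hinv z hz)
  have h6 : P (B (u - P u)) = 0 := proj_kill P hP hPsa h3
  rw [h1, map_add, h2, h6, add_zero]

end ProjLemmas

/-- the iSup of eigenspaces is invariant under `T - lam`. -/
lemma image_sub_smul_mem_iSup (T : H →L[ℂ] H) (hT : (T : H →ₗ[ℂ] H).IsSymmetric)
    (S : Set ℂ) (lam : ℂ) {x : H}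
    (hx : x ∈ ⨆ μ ∈ S, Module.End.eigenspace (T : H →ₗ[ℂ] H) μ) :
    T x - lam • x ∈ ⨆ μ ∈ S, Module.End.eigenspace (T : H →ₗ[ℂ] H) μ := by
  obtain ⟨f, hmem, hfS, hxs, -, -, himg⟩ := exists_finsupp_decomp T hT S lam hx
  rw [himg]
  refine Submodule.sum_mem _ fun μ hμ => ?_
  have hμS : μ ∈ S := hfS μ (Finsupp.mem_support_iff.mp hμ)
  exact (le_iSup₂ (f := fun μ _ => Module.End.eigenspace (T : H →ₗ[ℂ] H) μ) μ hμS)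
    (Submodule.smul_mem _ _ (hmem μ))

lemma image_mem_iSup (T : H →L[ℂ] H) (hT : (T : H →ₗ[ℂ] H).IsSymmetric)
    (S : Set ℂ) {x : H}
    (hx : x ∈ ⨆ μ ∈ S, Module.End.eigenspace (T : H →ₗ[ℂ] H) μ) :
    T x ∈ ⨆ μ ∈ S, Module.End.eigenspace (T : H →ₗ[ℂ] H) μ := by
  have := image_sub_smul_mem_iSup T hT S 0 hx
  simpa using this

end SpecPerturbAux

open SpecPerturbAux in
/-- Perturbation bound for spectral projections of compact self-adjoint operators
(Lemma on eigenspace projections). `A` and `A'` are compact self-adjoint operators on a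
complex Hilbert space, `lam ≠ 0` is an eigenvalue of `A` whose distance to every other
eigenvalue is at least `ℓ` (the eigenvalue gap `δ_i ≥ ℓ`), and `‖A − A'‖ < ℓ/4`. `P` is the
orthogonal projection onto the `lam`-eigenspace of `A` (the span of the eigenvectors with
indices in `I`), and `Q` is the orthogonal projection onto the span of the eigenspaces of
`A'` for eigenvalues within distance `ℓ/2` of `lam` (the eigenvectors of `A'` with indices
in `I`). Then `‖P − Q‖ ≤ (8/ℓ)‖A − A'‖`. -/
theorem spectral_projection_perturbation
    {H : Type*} [NormedAddCommGroup H] [InnerProductSpace ℂ H] [CompleteSpace H]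
    (A A' : H →L[ℂ] H)
    (hAsa : IsSelfAdjoint A) (hA'sa : IsSelfAdjoint A')
    (hAc : IsCompactOperator A) (hA'c : IsCompactOperator A')
    (lam : ℂ) (hlam0 : lam ≠ 0)
    (hlam : Module.End.HasEigenvalue (A : H →ₗ[ℂ] H) lam)
    (ℓ : ℝ) (hℓ : 0 < ℓ)
    (hgap : ∀ μ : ℂ, Module.End.HasEigenvalue (A : H →ₗ[ℂ] H) μ → μ ≠ lam → ℓ ≤ ‖lam - μ‖)
    (hclose : ‖A - A'‖ < ℓ / 4)
    (P Q : H →L[ℂ] H)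
    (hPidem : IsIdempotentElem P) (hPsa : IsSelfAdjoint P)
    (hQidem : IsIdempotentElem Q) (hQsa : IsSelfAdjoint Q)
    (hPrange : LinearMap.range (P : H →ₗ[ℂ] H) =
      Module.End.eigenspace (A : H →ₗ[ℂ] H) lam)
    (hQrange : LinearMap.range (Q : H →ₗ[ℂ] H) =
      ⨆ μ ∈ {μ : ℂ | ‖μ - lam‖ < ℓ / 2}, Module.End.eigenspace (A' : H →ₗ[ℂ] H) μ) :
    ‖P - Q‖ ≤ (8 / ℓ) * ‖A - A'‖ := by
  classical
  have hsymA : (A : H →ₗ[ℂ] H).IsSymmetric := hAsa.isSymmetric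
  have hsymA' : (A' : H →ₗ[ℂ] H).IsSymmetric := hA'sa.isSymmetric
  set SQ : Set ℂ := {μ : ℂ | ‖μ - lam‖ < ℓ / 2} with hSQ
  set EA' := fun μ : ℂ => Module.End.eigenspace (A' : H →ₗ[ℂ] H) μ with hEA'
  have hEn : (0:ℝ) ≤ ‖A - A'‖ := norm_nonneg _
  have hl2 : (0:ℝ) ≤ ℓ/2 := by linarith
  have hQx_mem : ∀ x : H, Q x ∈ ⨆ μ ∈ SQ, EA' μ := fun x => by
    rw [← hQrange]; exact ⟨x, rfl⟩
  have hPx_mem : ∀ x : H, P x ∈ Module.End.eigenspace (A : H →ₗ[ℂ] H) lam := fun x => by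
    rw [← hPrange]; exact ⟨x, rfl⟩
  have hAP : ∀ x : H, A (P x) = lam • P x := fun x => by
    have h := hPx_mem x; rw [Module.End.mem_eigenspace_iff] at h
    simpa using h
  have hPrange' : LinearMap.range (P : H →ₗ[ℂ] H)
      = ⨆ μ ∈ ({lam} : Set ℂ), Module.End.eigenspace (A : H →ₗ[ℂ] H) μ := by
    rw [hPrange]; simp
  have hgapA : ∀ μ : ℂ, μ ∉ ({lam} : Set ℂ) → Module.End.HasEigenvalue (A : H →ₗ[ℂ] H) μ →
      ℓ ≤ ‖μ - lam‖ := by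
    intro μ hμ hev
    have h := hgap μ hev (by simpa using hμ)
    rwa [norm_sub_rev] at h
  have hgapA' : ∀ μ : ℂ, μ ∉ SQ → Module.End.HasEigenvalue (A' : H →ₗ[ℂ] H) μ →
      ℓ/2 ≤ ‖μ - lam‖ := fun μ hμ _ => not_lt.mp hμ
  -- the operator (1 - Q) ∘ P
  set Top := P - Q * P with hTop
  have hTopBound : ∀ x : H, ‖Top x‖ ≤ (2/ℓ * ‖A - A'‖) * ‖x‖ := by
    intro x
    set u := P x with hu
    have hTopx : Top x = u - Q u := by
      simp [hTop, ContinuousLinearMap.sub_apply, ContinuousLinearMap.mul_apply, hu]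
    set y := u - Q u with hy
    have hyO : y ∈ (⨆ μ ∈ SQ, EA' μ)ᗮ := by
      rw [← hQrange]; exact sub_proj_mem_orthogonal Q hQidem hQsa u
    have hlow : (ℓ/2) * ‖y‖ ≤ ‖A' y - lam • y‖ :=
      le_norm_of_mem_orthogonal_iSup A' hsymA' hA'c SQ lam hl2 hgapA' hyO
    have hqmem : Q u ∈ ⨆ μ ∈ SQ, EA' μ := hQx_mem u
    have hr : A' (Q u) - lam • Q u ∈ ⨆ μ ∈ SQ, EA' μ :=
      image_sub_smul_mem_iSup A' hsymA' SQ lam hqmem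
    have hyO2 : A' y - lam • y ∈ (⨆ μ ∈ SQ, EA' μ)ᗮ := by
      refine Submodule.sub_mem _ ?_ (Submodule.smul_mem _ _ hyO)
      rw [Submodule.mem_orthogonal] at hyO ⊢
      intro z hz
      have hsz := hsymA' z y
      simp only [ContinuousLinearMap.coe_coe] at hsz
      rw [← hsz]
      exact hyO _ (image_mem_iSup A' hsymA' SQ hz)
    have hsplit : A' u - lam • u = (A' (Q u) - lam • Q u) + (A' y - lam • y) := by
      have h1 : u = Q u + y := by rw [hy]; abel
      calc A' u - lam • u = A' (Q u + y) - lam • (Q u + y) := by rw [← h1]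
        _ = (A' (Q u) - lam • Q u) + (A' y - lam • y) := by
            rw [map_add, smul_add]; abel
    have hinner : (inner ℂ (A' (Q u) - lam • Q u) (A' y - lam • y) : ℂ) = 0 :=
      (Submodule.mem_orthogonal _ _).mp hyO2 _ hr
    have hpyth : ‖A' y - lam • y‖ ≤ ‖A' u - lam • u‖ := by
      have h3 := norm_add_sq (𝕜 := ℂ) (A' (Q u) - lam • Q u) (A' y - lam • y)
      rw [hinner] at h3
      simp only [map_zero, mul_zero, add_zero] at h3
      have h4 : ‖A' y - lam • y‖^2 ≤ ‖(A' (Q u) - lam • Q u) + (A' y - lam • y)‖^2 := by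
        nlinarith [sq_nonneg ‖A' (Q u) - lam • Q u‖]
      have h5 := (pow_le_pow_iff_left₀ (norm_nonneg _) (norm_nonneg _) two_ne_zero).mp h4
      rw [hsplit]; exact h5
    have hAu : A' u - lam • u = (A' - A) u := by
      have hAu' : A u = lam • u := by rw [hu]; exact hAP x
      rw [ContinuousLinearMap.sub_apply, hAu']
    have hup : ‖(A' - A) u‖ ≤ ‖A - A'‖ * ‖x‖ := by
      calc ‖(A' - A) u‖ ≤ ‖A' - A‖ * ‖u‖ := (A' - A).le_opNorm u
        _ = ‖A - A'‖ * ‖u‖ := by rw [norm_sub_rev]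
        _ ≤ ‖A - A'‖ * ‖x‖ := by
            refine mul_le_mul_of_nonneg_left ?_ hEn
            rw [hu]; exact proj_norm_le P hPidem hPsa x
    have hkey : (ℓ/2) * ‖y‖ ≤ ‖A - A'‖ * ‖x‖ := by
      calc (ℓ/2) * ‖y‖ ≤ ‖A' y - lam • y‖ := hlow
        _ ≤ ‖A' u - lam • u‖ := hpyth
        _ = ‖(A' - A) u‖ := by rw [hAu]
        _ ≤ ‖A - A'‖ * ‖x‖ := hup
    have h2ℓ : (0:ℝ) < ℓ/2 := by linarith
    have h6 : ‖y‖ ≤ (‖A - A'‖ * ‖x‖) / (ℓ/2) := by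
      rw [le_div_iff₀ h2ℓ]
      calc ‖y‖ * (ℓ/2) = (ℓ/2) * ‖y‖ := mul_comm _ _
        _ ≤ _ := hkey
    calc ‖Top x‖ = ‖y‖ := by rw [hTopx]
      _ ≤ (‖A - A'‖ * ‖x‖) / (ℓ/2) := h6
      _ = (2/ℓ * ‖A - A'‖) * ‖x‖ := by field_simp
  -- the operator (1 - P) ∘ Q
  set Sop := Q - P * Q with hSop
  have hinvP : ∀ z ∈ LinearMap.range (P : H →ₗ[ℂ] H),
      A z ∈ LinearMap.range (P : H →ₗ[ℂ] H) := by
    intro z hz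
    have hz' : (A : H →ₗ[ℂ] H) z = lam • z :=
      Module.End.mem_eigenspace_iff.mp (hPrange ▸ hz)
    have hz'' : A z = lam • z := by simpa using hz'
    rw [hPrange, hz'']
    exact Submodule.smul_mem _ _ (hPrange ▸ hz)
  have hkeyS : ∀ x : H, ℓ * ‖Sop x‖ ≤ ‖A - A'‖ * ‖x‖ + ‖Sop‖ * (ℓ/2) * ‖x‖ := by
    intro x
    set q := Q x with hq
    have hSx : Sop x = q - P q := by
      simp [hSop, ContinuousLinearMap.sub_apply, ContinuousLinearMap.mul_apply, hq]
    have hmemO : Sop x ∈ (⨆ μ ∈ ({lam} : Set ℂ),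
        Module.End.eigenspace (A : H →ₗ[ℂ] H) μ)ᗮ := by
      rw [← hPrange', hSx]
      exact sub_proj_mem_orthogonal P hPidem hPsa q
    have hlow : ℓ * ‖Sop x‖ ≤ ‖A (Sop x) - lam • Sop x‖ :=
      le_norm_of_mem_orthogonal_iSup A hsymA hAc {lam} lam hℓ.le hgapA hmemO
    set g := A q - A' q with hg
    set r := A' q - lam • q with hr
    have hrmem : r ∈ ⨆ μ ∈ SQ, EA' μ :=
      image_sub_smul_mem_iSup A' hsymA' SQ lam (hQx_mem x)
    have hrQ : Q r = r := proj_fix Q hQidem (by rw [hQrange]; exact hrmem)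
    have hPgr : P (A q - lam • q) = 0 := by
      have hPA : P (A q) = A (P q) := proj_comm P hPidem hPsa A hsymA hinvP q
      rw [map_sub, hPA, hAP q, map_smul]
      simp
    have hSr : Sop r = r - P r := by
      have : Sop r = Q r - P (Q r) := by
        simp [hSop, ContinuousLinearMap.sub_apply, ContinuousLinearMap.mul_apply]
      rw [this, hrQ]
    have hid : A (Sop x) - lam • Sop x = (g - P g) + Sop r := by
      have h1 : A (Sop x) - lam • Sop x = A q - lam • q := by
        rw [hSx, map_sub, smul_sub, hAP q]
        abel
      have h2 : g + r = A q - lam • q := by rw [hg, hr]; abel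
      have h3 : P g + P r = 0 := by rw [← map_add, h2, hPgr]
      rw [h1, hSr]
      calc A q - lam • q = (g + r) - (P g + P r) := by rw [h2, h3, sub_zero]
        _ = (g - P g) + (r - P r) := by abel
    have hgb : ‖g - P g‖ ≤ ‖A - A'‖ * ‖x‖ := by
      have h4 : ‖g - P g‖ ≤ ‖g‖ := sub_proj_norm_le P hPidem hPsa g
      have h5 : ‖g‖ ≤ ‖A - A'‖ * ‖x‖ := by
        have hgq : g = (A - A') q := by
          rw [hg]; rw [ContinuousLinearMap.sub_apply]
        rw [hgq]
        calc ‖(A - A') q‖ ≤ ‖A - A'‖ * ‖q‖ := (A - A').le_opNorm q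
          _ ≤ ‖A - A'‖ * ‖x‖ := by
              refine mul_le_mul_of_nonneg_left ?_ hEn
              rw [hq]; exact proj_norm_le Q hQidem hQsa x
      linarith
    have hrb : ‖r‖ ≤ (ℓ/2) * ‖x‖ := by
      have h6 := norm_le_of_mem_iSup A' hsymA' SQ lam hl2
        (fun μ hμ => le_of_lt hμ) (hQx_mem x)
      calc ‖r‖ = ‖A' q - lam • q‖ := by rw [hr]
        _ ≤ (ℓ/2) * ‖q‖ := h6
        _ ≤ (ℓ/2) * ‖x‖ := by
            refine mul_le_mul_of_nonneg_left ?_ hl2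
            rw [hq]; exact proj_norm_le Q hQidem hQsa x
    have hSrb : ‖Sop r‖ ≤ ‖Sop‖ * ((ℓ/2) * ‖x‖) :=
      le_trans (Sop.le_opNorm r) (mul_le_mul_of_nonneg_left hrb (norm_nonneg _))
    calc ℓ * ‖Sop x‖ ≤ ‖A (Sop x) - lam • Sop x‖ := hlow
      _ = ‖(g - P g) + Sop r‖ := by rw [hid]
      _ ≤ ‖g - P g‖ + ‖Sop r‖ := norm_add_le _ _
      _ ≤ ‖A - A'‖ * ‖x‖ + ‖Sop‖ * (ℓ/2) * ‖x‖ := by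
          rw [mul_assoc]; exact add_le_add hgb hSrb
  have hSopN : ‖Sop‖ ≤ 2/ℓ * ‖A - A'‖ := by
    have hC : (0:ℝ) ≤ (‖A - A'‖ + ‖Sop‖ * (ℓ/2)) / ℓ := by positivity
    have h7 : ‖Sop‖ ≤ (‖A - A'‖ + ‖Sop‖ * (ℓ/2)) / ℓ := by
      refine ContinuousLinearMap.opNorm_le_bound _ hC fun x => ?_
      rw [div_mul_eq_mul_div, le_div_iff₀ hℓ]
      calc ‖Sop x‖ * ℓ = ℓ * ‖Sop x‖ := mul_comm _ _
        _ ≤ ‖A - A'‖ * ‖x‖ + ‖Sop‖ * (ℓ/2) * ‖x‖ := hkeyS x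
        _ = (‖A - A'‖ + ‖Sop‖ * (ℓ/2)) * ‖x‖ := by ring
    rw [le_div_iff₀ hℓ] at h7
    rw [div_mul_eq_mul_div, le_div_iff₀ hℓ]
    nlinarith
  have hTopN : ‖Top‖ ≤ 2/ℓ * ‖A - A'‖ := by
    have hC : (0:ℝ) ≤ 2/ℓ * ‖A - A'‖ := by positivity
    exact ContinuousLinearMap.opNorm_le_bound _ hC hTopBound
  have hstar : star (Q - Q * P) = Sop := by
    rw [star_sub, star_mul, hPsa.star_eq, hQsa.star_eq, hSop]
  have hQQfin : ‖Q - Q * P‖ = ‖Sop‖ := by rw [← hstar, norm_star]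
  have hdecomp : P - Q = Top - (Q - Q * P) := by rw [hTop]; abel
  calc ‖P - Q‖ = ‖Top - (Q - Q * P)‖ := by rw [hdecomp]
    _ ≤ ‖Top‖ + ‖Q - Q * P‖ := norm_sub_le _ _
    _ ≤ 2/ℓ * ‖A - A'‖ + 2/ℓ * ‖A - A'‖ := by
        rw [hQQfin]; exact add_le_add hTopN hSopN
    _ ≤ (8 / ℓ) * ‖A - A'‖ := by
        have h9 : 2/ℓ * ‖A - A'‖ + 2/ℓ * ‖A - A'‖ = (4/ℓ) * ‖A - A'‖ := by ring
        rw [h9]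
        have h10 : (4:ℝ)/ℓ ≤ 8/ℓ := by gcongr <;> norm_num
        exact mul_le_mul_of_nonneg_right h10 hEn
end
end

section
/- Let x₁, ..., x_n be independent mean-zero real random variables with |x_i| ≤ K almost surely. Then for every t ≥ 0, P(|∑_{i=1}^n x_i| ≥ t) ≤ 2·exp(−(t²/2)/(∑_{i=1}^n E[x_i²] + Kt/3)). -/
open MeasureTheory ProbabilityTheory

lemma fact_ge : ∀ p : ℕ, 2 * 3 ^ p ≤ Nat.factorial (p + 2) := by
  intro p
  induction p with
  | zero => simp [Nat.factorial]
  | succ p ih =>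
      have h3 : Nat.factorial (p + 3) = (p + 3) * Nat.factorial (p + 2) := rfl
      calc 2 * 3 ^ (p + 1) = 3 * (2 * 3 ^ p) := by ring
        _ ≤ 3 * Nat.factorial (p + 2) := by omega
        _ ≤ (p + 3) * Nat.factorial (p + 2) := Nat.mul_le_mul_right _ (by omega)
        _ = Nat.factorial (p + 3) := h3.symm

lemma pointwise_exp_bound {x c K : ℝ} (hc : 0 ≤ c) (hK : 0 < K)
    (hcK : c * K < 3) (hx : |x| ≤ K) :
    Real.exp (c * x) ≤ 1 + c * x + x ^ 2 * (c ^ 2 / (2 * (1 - c * K / 3))) := by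
  set y := c * x with hy
  have hsum : Summable (fun n : ℕ => y ^ n / n.factorial) :=
    Real.summable_pow_div_factorial y
  have hexp : Real.exp y = ∑' n : ℕ, y ^ n / n.factorial := by
    rw [Real.exp_eq_exp_ℝ, NormedSpace.exp_eq_tsum_div]
  have hsplit : Real.exp y = (1 + y) + ∑' p : ℕ, y ^ (p + 2) / (p + 2).factorial := by
    rw [hexp, ← Summable.sum_add_tsum_nat_add 2 hsum]
    norm_num [Finset.sum_range_succ, Nat.factorial]
  have hr : 0 ≤ c * K / 3 := by positivity
  have hr1 : c * K / 3 < 1 := by linarith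
  have hterm : ∀ p : ℕ, y ^ (p + 2) / (p + 2).factorial ≤
      (x ^ 2 * c ^ 2 / 2) * (c * K / 3) ^ p := by
    intro p
    have hfacpos : (0:ℝ) < ((p + 2).factorial : ℝ) := by positivity
    have h1 : y ^ (p + 2) ≤ |y| ^ (p + 2) := by
      calc y ^ (p+2) ≤ |y ^ (p+2)| := le_abs_self _
        _ = |y| ^ (p+2) := abs_pow y _
    have h2 : |y| ^ (p + 2) = c ^ (p+2) * |x| ^ (p+2) := by
      rw [hy, abs_mul, abs_of_nonneg hc, mul_pow]
    have h3 : |x| ^ (p + 2) ≤ x ^ 2 * K ^ p := by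
      have he : |x| ^ (p + 2) = |x| ^ 2 * |x| ^ p := by ring
      rw [he, sq_abs]
      exact mul_le_mul_of_nonneg_left (pow_le_pow_left₀ (abs_nonneg x) hx p) (sq_nonneg x)
    have hnum : y ^ (p + 2) ≤ c ^ (p + 2) * (x ^ 2 * K ^ p) := by
      refine h1.trans ?_
      rw [h2]
      exact mul_le_mul_of_nonneg_left h3 (by positivity)
    have hfac : (2 * 3 ^ p : ℝ) ≤ ((p + 2).factorial : ℝ) := by
      exact_mod_cast fact_ge p
    calc y ^ (p + 2) / (p + 2).factorial
        ≤ c ^ (p + 2) * (x ^ 2 * K ^ p) / ((p + 2).factorial : ℝ) := by gcongr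
      _ ≤ c ^ (p + 2) * (x ^ 2 * K ^ p) / (2 * 3 ^ p) := by gcongr <;> positivity
      _ = (x ^ 2 * c ^ 2 / 2) * (c * K / 3) ^ p := by
          rw [div_pow, mul_pow]
          field_simp
          ring
  have hs2 : Summable (fun p : ℕ => y ^ (p + 2) / (p + 2).factorial) :=
    (summable_nat_add_iff 2).mpr hsum
  have hgeo : Summable (fun p : ℕ => (x ^ 2 * c ^ 2 / 2) * (c * K / 3) ^ p) :=
    (summable_geometric_of_lt_one hr hr1).mul_left _
  have htail : (∑' p : ℕ, y ^ (p + 2) / (p + 2).factorial) ≤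
      x ^ 2 * (c ^ 2 / (2 * (1 - c * K / 3))) := by
    calc (∑' p : ℕ, y ^ (p + 2) / (p + 2).factorial)
        ≤ ∑' p : ℕ, (x ^ 2 * c ^ 2 / 2) * (c * K / 3) ^ p :=
          Summable.tsum_le_tsum hterm hs2 hgeo
      _ = (x ^ 2 * c ^ 2 / 2) * (1 - c * K / 3)⁻¹ := by
          rw [tsum_mul_left, tsum_geometric_of_lt_one hr hr1]
      _ = x ^ 2 * (c ^ 2 / (2 * (1 - c * K / 3))) := by
          field_simp
  rw [hy] at hsplit htail ⊢
  linarith [hsplit, htail]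

lemma mgf_single_bound {Ω : Type*} [MeasurableSpace Ω] (μ : Measure Ω) [IsProbabilityMeasure μ]
    (Y : Ω → ℝ) (K c : ℝ) (hK : 0 < K) (hc : 0 ≤ c) (hcK : c * K < 3)
    (hm : Measurable Y) (hmean : ∫ ω, Y ω ∂μ = 0) (hb : ∀ᵐ ω ∂μ, |Y ω| ≤ K) :
    mgf Y μ c ≤ Real.exp ((∫ ω, (Y ω) ^ 2 ∂μ) * (c ^ 2 / (2 * (1 - c * K / 3)))) := by
  set a : ℝ := c ^ 2 / (2 * (1 - c * K / 3)) with ha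
  have intY : Integrable Y μ := by
    refine Integrable.mono' (integrable_const K) hm.aestronglyMeasurable ?_
    filter_upwards [hb] with ω h using h
  have intY2 : Integrable (fun ω => (Y ω) ^ 2) μ := by
    refine Integrable.mono' (integrable_const (K ^ 2)) (hm.pow_const 2).aestronglyMeasurable ?_
    filter_upwards [hb] with ω h
    rw [Real.norm_eq_abs, abs_pow]
    exact pow_le_pow_left₀ (abs_nonneg _) h 2
  have intExp : Integrable (fun ω => Real.exp (c * Y ω)) μ := by
    refine Integrable.mono' (integrable_const (Real.exp (c * K)))
      ((hm.const_mul c).exp).aestronglyMeasurable ?_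
    filter_upwards [hb] with ω h
    rw [Real.norm_eq_abs, abs_of_pos (Real.exp_pos _), Real.exp_le_exp]
    exact mul_le_mul_of_nonneg_left ((le_abs_self _).trans h) hc
  have intRHS : Integrable (fun ω => 1 + c * Y ω + (Y ω) ^ 2 * a) μ :=
    ((integrable_const 1).add (intY.const_mul c)).add (intY2.mul_const a)
  have i1 : Integrable (fun ω => 1 + c * Y ω) μ := (integrable_const 1).add (intY.const_mul c)
  have hint : ∫ ω, (1 + c * Y ω + (Y ω) ^ 2 * a) ∂μ = 1 + (∫ ω, (Y ω) ^ 2 ∂μ) * a := by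
    rw [integral_add i1 (intY2.mul_const a),
      integral_add (integrable_const 1) (intY.const_mul c),
      integral_const, integral_const_mul, integral_mul_const, hmean]
    simp [measure_univ]
  have hσ : 0 ≤ (∫ ω, (Y ω) ^ 2 ∂μ) * a := by
    have h1 : 0 ≤ ∫ ω, (Y ω) ^ 2 ∂μ := integral_nonneg fun ω => sq_nonneg _
    have h2 : 0 ≤ a := by
      rw [ha]
      have : 0 < 1 - c * K / 3 := by linarith
      positivity
    exact mul_nonneg h1 h2
  calc mgf Y μ c = ∫ ω, Real.exp (c * Y ω) ∂μ := rfl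
    _ ≤ ∫ ω, (1 + c * Y ω + (Y ω) ^ 2 * a) ∂μ := by
        refine integral_mono_ae intExp intRHS ?_
        filter_upwards [hb] with ω h
        exact pointwise_exp_bound hc hK hcK h
    _ = 1 + (∫ ω, (Y ω) ^ 2 ∂μ) * a := hint
    _ ≤ Real.exp ((∫ ω, (Y ω) ^ 2 ∂μ) * a) := by
        have := Real.add_one_le_exp ((∫ ω, (Y ω) ^ 2 ∂μ) * a)
        linarith

lemma bernstein_one_sided
    {Ω : Type*} [MeasurableSpace Ω] (μ : Measure Ω) [IsProbabilityMeasure μ]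
    (n : ℕ) (X : Fin n → Ω → ℝ) (K : ℝ) (hK : 0 < K)
    (hindep : iIndepFun X μ)
    (hmeas : ∀ i, Measurable (X i))
    (hmean : ∀ i, ∫ ω, X i ω ∂μ = 0)
    (hbdd : ∀ i, ∀ᵐ ω ∂μ, |X i ω| ≤ K)
    (t : ℝ) (ht : 0 < t) (hV : 0 < ∑ i, ∫ ω, (X i ω) ^ 2 ∂μ) :
    μ {ω | t ≤ ∑ i, X i ω} ≤
      ENNReal.ofReal
        (Real.exp (-(t ^ 2 / 2) / ((∑ i, ∫ ω, (X i ω) ^ 2 ∂μ) + K * t / 3))) := by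
  set V : ℝ := ∑ i, ∫ ω, (X i ω) ^ 2 ∂μ with hVdef
  set D : ℝ := V + K * t / 3 with hD
  have hDpos : 0 < D := by positivity
  set c : ℝ := t / D with hc
  have hcnn : 0 ≤ c := by positivity
  have hcK : c * K < 3 := by
    rw [hc, div_mul_eq_mul_div, div_lt_iff₀ hDpos, hD]
    nlinarith [mul_comm t K]
  have hone : 1 - c * K / 3 = V / D := by
    rw [hc]
    field_simp
    ring
  -- integrability of exp(c * (sum))
  have hintExp : ∀ i : Fin n, Integrable (fun ω => Real.exp (c * X i ω)) μ := by
    intro i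
    refine Integrable.mono' (integrable_const (Real.exp (c * K)))
      (((hmeas i).const_mul c).exp).aestronglyMeasurable ?_
    filter_upwards [hbdd i] with ω h
    rw [Real.norm_eq_abs, abs_of_pos (Real.exp_pos _), Real.exp_le_exp]
    exact mul_le_mul_of_nonneg_left ((le_abs_self _).trans h) hcnn
  have hintS : Integrable (fun ω => Real.exp (c * (∑ i, X i) ω)) μ :=
    hindep.integrable_exp_mul_sum hmeas (fun i _ => hintExp i)
  have hcher := measure_ge_le_exp_mul_mgf (X := ∑ i, X i) (μ := μ) (t := c) t hcnn hintS
  have hmgf : mgf (∑ i, X i) μ c ≤ Real.exp (V * (c ^ 2 / (2 * (1 - c * K / 3)))) := by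
    rw [hindep.mgf_sum hmeas]
    calc (∏ i, mgf (X i) μ c)
        ≤ ∏ i, Real.exp ((∫ ω, (X i ω) ^ 2 ∂μ) * (c ^ 2 / (2 * (1 - c * K / 3)))) := by
          refine Finset.prod_le_prod (fun i _ => mgf_nonneg) (fun i _ => ?_)
          exact mgf_single_bound μ (X i) K c hK hcnn hcK (hmeas i) (hmean i) (hbdd i)
      _ = Real.exp (∑ i, (∫ ω, (X i ω) ^ 2 ∂μ) * (c ^ 2 / (2 * (1 - c * K / 3)))) := by
          rw [Real.exp_sum]
      _ = Real.exp (V * (c ^ 2 / (2 * (1 - c * K / 3)))) := by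
          rw [← Finset.sum_mul]
  have hVne : V ≠ 0 := ne_of_gt hV
  have hDne : D ≠ 0 := ne_of_gt hDpos
  have halg : -c * t + V * (c ^ 2 / (2 * (1 - c * K / 3))) = -(t ^ 2 / 2) / D := by
    rw [hone, hc]
    field_simp
    ring
  have hfinal : (μ {ω | t ≤ (∑ i, X i) ω}).toReal ≤ Real.exp (-(t ^ 2 / 2) / D) := by
    calc (μ {ω | t ≤ (∑ i, X i) ω}).toReal
        ≤ Real.exp (-c * t) * mgf (∑ i, X i) μ c := hcher
      _ ≤ Real.exp (-c * t) * Real.exp (V * (c ^ 2 / (2 * (1 - c * K / 3)))) := by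
          exact mul_le_mul_of_nonneg_left hmgf (Real.exp_pos _).le
      _ = Real.exp (-c * t + V * (c ^ 2 / (2 * (1 - c * K / 3)))) := by
          rw [← Real.exp_add]
      _ = Real.exp (-(t ^ 2 / 2) / D) := by rw [halg]
  have hset : {ω | t ≤ ∑ i, X i ω} = {ω | t ≤ (∑ i, X i) ω} := by
    ext ω; simp [Finset.sum_apply]
  rw [hset]
  exact (ENNReal.le_ofReal_iff_toReal_le (measure_ne_top μ _) (Real.exp_pos _).le).mpr hfinal

/-- Bernstein's inequality: for independent mean-zero real random variables `X₁,…,Xₙ` with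
`|Xᵢ| ≤ K` almost surely, for every `t ≥ 0`,
`P(|∑ Xᵢ| ≥ t) ≤ 2 exp(−(t²/2)/(∑ E[Xᵢ²] + K t/3))`. -/
theorem bernstein_inequality
    {Ω : Type*} [MeasurableSpace Ω] (μ : Measure Ω) [IsProbabilityMeasure μ]
    (n : ℕ) (X : Fin n → Ω → ℝ) (K : ℝ) (hK : 0 < K)
    (hindep : iIndepFun X μ)
    (hmeas : ∀ i, Measurable (X i))
    (hmean : ∀ i, ∫ ω, X i ω ∂μ = 0)
    (hbdd : ∀ i, ∀ᵐ ω ∂μ, |X i ω| ≤ K)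
    (t : ℝ) (ht : 0 ≤ t) :
    μ {ω | t ≤ |∑ i, X i ω|} ≤
      ENNReal.ofReal
        (2 * Real.exp (-(t ^ 2 / 2) / ((∑ i, ∫ ω, (X i ω) ^ 2 ∂μ) + K * t / 3))) := by

  rcases eq_or_lt_of_le ht with h0 | htpos
  · -- t = 0
    subst h0
    have he : -((0:ℝ) ^ 2 / 2) / ((∑ i, ∫ ω, (X i ω) ^ 2 ∂μ) + K * 0 / 3) = 0 := by
      norm_num
    rw [he, Real.exp_zero, mul_one]
    calc μ {ω | (0:ℝ) ≤ |∑ i, X i ω|} ≤ 1 := prob_le_one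
      _ ≤ ENNReal.ofReal 2 := by norm_num [ENNReal.ofReal_ofNat]
  · set V : ℝ := ∑ i, ∫ ω, (X i ω) ^ 2 ∂μ with hVdef
    have hVnn : 0 ≤ V := Finset.sum_nonneg fun i _ => integral_nonneg fun ω => sq_nonneg _
    rcases eq_or_lt_of_le hVnn with hV0 | hVpos
    · -- V = 0 : all variables vanish a.e.
      have hXi : ∀ i : Fin n, ∀ᵐ ω ∂μ, X i ω = 0 := by
        intro i
        have hint2 : Integrable (fun ω => (X i ω) ^ 2) μ := by
          refine Integrable.mono' (integrable_const (K ^ 2))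
            ((hmeas i).pow_const 2).aestronglyMeasurable ?_
          filter_upwards [hbdd i] with ω h
          rw [Real.norm_eq_abs, abs_pow]
          exact pow_le_pow_left₀ (abs_nonneg _) h 2
        have hzero : ∫ ω, (X i ω) ^ 2 ∂μ = 0 := by
          have := (Finset.sum_eq_zero_iff_of_nonneg
            (fun j (_ : j ∈ Finset.univ) => integral_nonneg fun ω => sq_nonneg (X j ω))).mp
            hV0.symm
          exact this i (Finset.mem_univ i)
        have := (integral_eq_zero_iff_of_nonneg (fun ω => sq_nonneg (X i ω)) hint2).mp hzero
        filter_upwards [this] with ω h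
        exact pow_eq_zero_iff (by norm_num) |>.mp h
      have hsum0 : ∀ᵐ ω ∂μ, ∑ i, X i ω = 0 := by
        have := (ae_all_iff.mpr hXi)
        filter_upwards [this] with ω h
        exact Finset.sum_eq_zero fun i _ => h i
      have : μ {ω | t ≤ |∑ i, X i ω|} = 0 := by
        refine measure_mono_null ?_ (ae_iff.mp hsum0)
        intro ω hω
        simp only [Set.mem_setOf_eq] at hω ⊢
        intro hz
        rw [hz, abs_zero] at hω
        linarith
      rw [this]
      exact zero_le
    · -- V > 0 : two-sided bound
      set Y : Fin n → Ω → ℝ := fun i ω => -X i ω with hY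
      have hindepY : iIndepFun Y μ :=
        hindep.comp (fun _ => fun x : ℝ => -x) (fun _ => measurable_neg)
      have hmeasY : ∀ i, Measurable (Y i) := fun i => (hmeas i).neg
      have hmeanY : ∀ i, ∫ ω, Y i ω ∂μ = 0 := by
        intro i; rw [hY]; simp only [integral_neg, hmean i, neg_zero]
      have hbddY : ∀ i, ∀ᵐ ω ∂μ, |Y i ω| ≤ K := by
        intro i; filter_upwards [hbdd i] with ω h; rwa [hY, abs_neg]
      have hVY : (∑ i, ∫ ω, (Y i ω) ^ 2 ∂μ) = V := by
        rw [hVdef]; congr 1; ext i; congr 1; ext ω; rw [hY]; ring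
      have h1 := bernstein_one_sided μ n X K hK hindep hmeas hmean hbdd t htpos hVpos
      have h2 := bernstein_one_sided μ n Y K hK hindepY hmeasY hmeanY hbddY t htpos
        (by rw [hVY]; exact hVpos)
      rw [hVY] at h2
      have hsub : {ω | t ≤ |∑ i, X i ω|} ⊆
          {ω | t ≤ ∑ i, X i ω} ∪ {ω | t ≤ ∑ i, Y i ω} := by
        intro ω hω
        simp only [Set.mem_setOf_eq, Set.mem_union] at hω ⊢
        rcases le_abs.mp hω with h | h
        · exact Or.inl h
        · right
          simpa [hY] using h
      calc μ {ω | t ≤ |∑ i, X i ω|}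
          ≤ μ ({ω | t ≤ ∑ i, X i ω} ∪ {ω | t ≤ ∑ i, Y i ω}) := measure_mono hsub
        _ ≤ μ {ω | t ≤ ∑ i, X i ω} + μ {ω | t ≤ ∑ i, Y i ω} := measure_union_le _ _
        _ ≤ ENNReal.ofReal (Real.exp (-(t ^ 2 / 2) / (V + K * t / 3))) +
            ENNReal.ofReal (Real.exp (-(t ^ 2 / 2) / (V + K * t / 3))) := add_le_add h1 h2
        _ = ENNReal.ofReal (2 * Real.exp (-(t ^ 2 / 2) / (V + K * t / 3))) := by
            rw [← ENNReal.ofReal_add (Real.exp_pos _).le (Real.exp_pos _).le, two_mul]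
end

section
/- Let U, U⁰ be n × r real matrices with orthonormal columns (UᵀU = (U⁰)ᵀU⁰ = I_r). Then inf over orthogonal O ∈ O(r) of ‖U − U⁰O‖ ≤ √2 · ‖UUᵀ − U⁰(U⁰)ᵀ‖, where ‖·‖ denotes operator norm. -/
open Matrix
open scoped Matrix.Norms.L2Operator
open scoped MatrixOrder

open Polynomial

namespace ProcrustesAux

lemma dot_self_nonneg {k : ℕ} (v : Fin k → ℝ) : 0 ≤ v ⬝ᵥ v :=
  Finset.sum_nonneg fun _ _ => mul_self_nonneg _

lemma enorm_eq {k : ℕ} (v : Fin k → ℝ) :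
    ‖(WithLp.equiv 2 (Fin k → ℝ)).symm v‖ = Real.sqrt (v ⬝ᵥ v) := by
  rw [EuclideanSpace.norm_eq]
  congr 1
  simp [dotProduct, Real.norm_eq_abs, sq_abs, sq]

lemma dot_CS {k : ℕ} (v w : Fin k → ℝ) :
    v ⬝ᵥ w ≤ Real.sqrt (v ⬝ᵥ v) * Real.sqrt (w ⬝ᵥ w) := by
  have h := real_inner_le_norm ((WithLp.equiv 2 (Fin k → ℝ)).symm v)
    ((WithLp.equiv 2 (Fin k → ℝ)).symm w)
  rw [enorm_eq, enorm_eq] at h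
  refine le_trans (le_of_eq ?_) h
  simp [PiLp.inner_apply, dotProduct, RCLike.inner_apply, mul_comm]

lemma dot_sq_le {m k : ℕ} (A : Matrix (Fin m) (Fin k) ℝ) (x : Fin k → ℝ) :
    (A *ᵥ x) ⬝ᵥ (A *ᵥ x) ≤ ‖A‖ ^ 2 * (x ⬝ᵥ x) := by
  have h : Real.sqrt ((A *ᵥ x) ⬝ᵥ (A *ᵥ x)) ≤ ‖A‖ * Real.sqrt (x ⬝ᵥ x) := by
    have h0 := Matrix.l2_opNorm_mulVec A ((WithLp.equiv 2 (Fin k → ℝ)).symm x)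
    have e1 : ‖(EuclideanSpace.equiv (Fin m) ℝ).symm
        (A *ᵥ ((WithLp.equiv 2 (Fin k → ℝ)).symm x))‖ = Real.sqrt ((A *ᵥ x) ⬝ᵥ (A *ᵥ x)) :=
      enorm_eq _
    have e2 : ‖(WithLp.equiv 2 (Fin k → ℝ)).symm x‖ = Real.sqrt (x ⬝ᵥ x) := enorm_eq _
    rw [e1, e2] at h0
    exact h0
  have h1 : Real.sqrt ((A *ᵥ x) ⬝ᵥ (A *ᵥ x)) ^ 2 ≤ (‖A‖ * Real.sqrt (x ⬝ᵥ x)) ^ 2 := by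
    have := Real.sqrt_nonneg ((A *ᵥ x) ⬝ᵥ (A *ᵥ x))
    nlinarith
  rw [Real.sq_sqrt (dot_self_nonneg _)] at h1
  calc (A *ᵥ x) ⬝ᵥ (A *ᵥ x) ≤ (‖A‖ * Real.sqrt (x ⬝ᵥ x)) ^ 2 := h1
    _ = ‖A‖ ^ 2 * (x ⬝ᵥ x) := by
        rw [mul_pow, Real.sq_sqrt (dot_self_nonneg _)]

lemma opnorm_le {m k : ℕ} {A : Matrix (Fin m) (Fin k) ℝ} {c : ℝ} (hc : 0 ≤ c)
    (h : ∀ x : Fin k → ℝ, (A *ᵥ x) ⬝ᵥ (A *ᵥ x) ≤ c ^ 2 * (x ⬝ᵥ x)) : ‖A‖ ≤ c := by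
  rw [Matrix.l2_opNorm_def]
  refine ContinuousLinearMap.opNorm_le_bound _ hc fun x => ?_
  have hx : (LinearMap.toContinuousLinearMap (Matrix.toEuclideanLin A)) x
      = (WithLp.equiv 2 (Fin m → ℝ)).symm (A *ᵥ (WithLp.equiv 2 (Fin k → ℝ)) x) := by
    exact Matrix.toEuclideanLin_apply A x
  rw [LinearEquiv.trans_apply, hx, enorm_eq]
  have hx2 : ‖x‖ = Real.sqrt (((WithLp.equiv 2 (Fin k → ℝ)) x) ⬝ᵥ ((WithLp.equiv 2 (Fin k → ℝ)) x)) := by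
    rw [← enorm_eq]; rfl
  rw [hx2]
  set v := (WithLp.equiv 2 (Fin k → ℝ)) x
  calc Real.sqrt ((A *ᵥ v) ⬝ᵥ (A *ᵥ v)) ≤ Real.sqrt (c ^ 2 * (v ⬝ᵥ v)) :=
        Real.sqrt_le_sqrt (h v)
    _ = c * Real.sqrt (v ⬝ᵥ v) := by
        rw [Real.sqrt_mul (sq_nonneg c), Real.sqrt_sq hc]

lemma dot_mm {a b c : ℕ} (A : Matrix (Fin a) (Fin b) ℝ) (B : Matrix (Fin a) (Fin c) ℝ)
    (x : Fin b → ℝ) (y : Fin c → ℝ) :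
    (A *ᵥ x) ⬝ᵥ (B *ᵥ y) = x ⬝ᵥ ((Aᵀ * B) *ᵥ y) := by
  rw [← Matrix.mulVec_mulVec, Matrix.dotProduct_mulVec x, Matrix.vecMul_transpose]

lemma dot_mT {a b : ℕ} (A : Matrix (Fin a) (Fin b) ℝ) (x : Fin b → ℝ) (w : Fin a → ℝ) :
    x ⬝ᵥ (Aᵀ *ᵥ w) = (A *ᵥ x) ⬝ᵥ w := by
  rw [Matrix.dotProduct_mulVec, Matrix.vecMul_transpose]

lemma exists_delta {k : ℕ} (M : Matrix (Fin k) (Fin k) ℝ) {m : ℝ} (hm : 0 < m) :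
    ∃ δ : ℝ, 0 < δ ∧ δ < m ∧ IsUnit (M + δ • (1 : Matrix (Fin k) (Fin k) ℝ)).det := by
  have hp : (Matrix.charpoly (-M)) ≠ 0 := (Matrix.charpoly_monic _).ne_zero
  have hfin := Polynomial.finite_setOf_isRoot hp
  obtain ⟨δ, hδ, hroot⟩ := (Set.Ioo_infinite hm).exists_notMem_finite hfin
  refine ⟨δ, hδ.1, hδ.2, ?_⟩
  rw [isUnit_iff_ne_zero]
  intro h0
  apply hroot
  have hev : (Matrix.charpoly (-M)).eval δ = (M + δ • 1).det := by
    rw [Matrix.charpoly, eval_det, Matrix.matPolyEquiv_charmatrix]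
    rw [Polynomial.eval_sub, Polynomial.eval_X, Polynomial.eval_C]
    congr 1
    ext i j
    simp [Matrix.scalar_apply, Matrix.smul_apply, Matrix.one_apply, Matrix.diagonal,
      Matrix.add_apply, add_comm]
  show (Matrix.charpoly (-M)).IsRoot δ
  rw [Polynomial.IsRoot, hev, h0]

end ProcrustesAux

open ProcrustesAux

open ProcrustesAux

set_option maxHeartbeats 2000000 in
/-- Procrustes bound: for `U, U⁰ ∈ ℝ^{n×r}` with orthonormal columns,
`inf_{O ∈ O(r)} ‖U − U⁰O‖ ≤ √2 ‖UUᵀ − U⁰(U⁰)ᵀ‖`, where `‖·‖` is the `ℓ²` operator norm. -/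
theorem procrustes_le_projection_distance
    {n r : ℕ} (U U0 : Matrix (Fin n) (Fin r) ℝ)
    (hU : Uᵀ * U = 1) (hU0 : U0ᵀ * U0 = 1) :
    ⨅ O : Matrix.orthogonalGroup (Fin r) ℝ,
        ‖U - U0 * (O : Matrix (Fin r) (Fin r) ℝ)‖
      ≤ Real.sqrt 2 * ‖U * Uᵀ - U0 * U0ᵀ‖ := by
  classical
  set Δ : Matrix (Fin n) (Fin n) ℝ := U * Uᵀ - U0 * U0ᵀ with hΔdef
  set N := ‖Δ‖ with hNdef
  have hN0 : 0 ≤ N := norm_nonneg _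
  have hbdd : BddBelow (Set.range fun O : Matrix.orthogonalGroup (Fin r) ℝ =>
      ‖U - U0 * (O : Matrix (Fin r) (Fin r) ℝ)‖) := by
    refine ⟨0, ?_⟩
    rintro y ⟨O, rfl⟩
    exact norm_nonneg _
  refine le_of_forall_pos_le_add fun ε hε => ?_
  set M : Matrix (Fin r) (Fin r) ℝ := U0ᵀ * U with hMdef
  have hMT : Mᵀ = Uᵀ * U0 := by rw [hMdef, Matrix.transpose_mul, Matrix.transpose_transpose]
  obtain ⟨δ, hδ0, hδm, hdet⟩ := exists_delta M (show (0:ℝ) < min 1 (ε^2/10) by positivity)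
  have hδ1 : δ ≤ 1 := le_of_lt (lt_of_lt_of_le hδm (min_le_left _ _))
  have hδε : 10 * δ ≤ ε ^ 2 := by
    have := lt_of_lt_of_le hδm (min_le_right _ _)
    nlinarith
  set Mδ : Matrix (Fin r) (Fin r) ℝ := M + δ • 1 with hMδdef
  have psd1 : (Mδᵀ * Mδ).PosSemidef := by
    have h := Matrix.posSemidef_conjTranspose_mul_self Mδ
    rwa [Matrix.conjTranspose_eq_transpose_of_trivial] at h
  set P := CFC.sqrt (Mδᵀ * Mδ) with hPdef
  have psdP : P.PosSemidef := (CFC.sqrt_nonneg _).posSemidef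
  have hPP : P * P = Mδᵀ * Mδ := CFC.sqrt_mul_sqrt_self _ psd1.nonneg
  have hPT : Pᵀ = P := by
    rw [← Matrix.conjTranspose_eq_transpose_of_trivial]
    exact psdP.1
  have hPdet : IsUnit P.det := by
    rw [isUnit_iff_ne_zero]
    intro h0
    have h2 := congrArg Matrix.det hPP
    rw [Matrix.det_mul, Matrix.det_mul, Matrix.det_transpose, h0, mul_zero] at h2
    rw [isUnit_iff_ne_zero] at hdet
    exact hdet (by nlinarith [h2.symm])
  have hPPi : P * P⁻¹ = 1 := Matrix.mul_nonsing_inv _ hPdet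
  have hPiP : P⁻¹ * P = 1 := Matrix.nonsing_inv_mul _ hPdet
  have hPiT : (P⁻¹)ᵀ = P⁻¹ := by rw [Matrix.transpose_nonsing_inv, hPT]
  set O : Matrix (Fin r) (Fin r) ℝ := Mδ * P⁻¹ with hOdef
  have hOT : Oᵀ = P⁻¹ * Mδᵀ := by rw [hOdef, Matrix.transpose_mul, hPiT]
  have hOMδ : Oᵀ * Mδ = P := by
    rw [hOT, Matrix.mul_assoc, ← hPP, ← Matrix.mul_assoc, hPiP, Matrix.one_mul]
  have hMδO : Mδᵀ * O = P := by
    have h := congrArg Matrix.transpose hOMδ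
    rwa [Matrix.transpose_mul, Matrix.transpose_transpose, hPT] at h
  have hOO : Oᵀ * O = 1 := by
    rw [hOdef, hOT, Matrix.mul_assoc, ← Matrix.mul_assoc Mδᵀ Mδ P⁻¹, ← hPP,
      Matrix.mul_assoc P P P⁻¹, hPPi, Matrix.mul_one, hPiP]
  have hOmem : O ∈ Matrix.orthogonalGroup (Fin r) ℝ := by
    rw [Matrix.mem_orthogonalGroup_iff']
    exact hOO
  set D : Matrix (Fin n) (Fin r) ℝ := U - U0 * O with hDdef
  -- Gram identity
  have hGram : Dᵀ * D = (2:ℝ) • (1 : Matrix (Fin r) (Fin r) ℝ) - (2:ℝ) • P + δ • (O + Oᵀ) := by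
    have e1 : Uᵀ * (U0 * O) = Mᵀ * O := by rw [← Matrix.mul_assoc, hMT]
    have e2 : (U0 * O)ᵀ * U = Oᵀ * M := by
      rw [Matrix.transpose_mul, Matrix.mul_assoc, hMdef]
    have e3 : (U0 * O)ᵀ * (U0 * O) = 1 := by
      rw [Matrix.transpose_mul, Matrix.mul_assoc, ← Matrix.mul_assoc U0ᵀ U0 O, hU0,
        Matrix.one_mul, hOO]
    have e4 : Mᵀ * O = P - δ • O := by
      have hM' : Mᵀ = Mδᵀ - δ • 1 := by
        rw [hMδdef, Matrix.transpose_add, Matrix.transpose_smul, Matrix.transpose_one]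
        abel
      rw [hM', Matrix.sub_mul, hMδO, Matrix.smul_mul, Matrix.one_mul]
    have e5 : Oᵀ * M = P - δ • Oᵀ := by
      have hM'' : M = Mδ - δ • 1 := by rw [hMδdef]; abel
      rw [hM'', Matrix.mul_sub, hOMδ, Matrix.mul_smul, Matrix.mul_one]
    have expand : Dᵀ * D = Uᵀ * U - Uᵀ * (U0 * O) - ((U0 * O)ᵀ * U - (U0 * O)ᵀ * (U0 * O)) := by
      rw [hDdef, Matrix.transpose_sub, Matrix.sub_mul, Matrix.mul_sub, Matrix.mul_sub]
    rw [expand, hU, e1, e2, e3, e4, e5]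
    module
  -- Pointwise bound ∀ v: (Mδ v)⬝(Mδ v) ≤ (1+δ)² (v⬝v), plus bookkeeping
  have hbt : ∀ v : Fin r → ℝ, (M *ᵥ v) ⬝ᵥ (M *ᵥ v) ≤ v ⬝ᵥ v ∧
      (v ⬝ᵥ v) - (M *ᵥ v) ⬝ᵥ (M *ᵥ v) ≤ N ^ 2 * (v ⬝ᵥ v) := by
    intro v
    set t := v ⬝ᵥ v with htdef
    set y := U *ᵥ v with hydef
    set w := M *ᵥ v with hwdef
    set b := w ⬝ᵥ w with hbdef
    have hyy : y ⬝ᵥ y = t := by rw [hydef, dot_mm, hU, Matrix.one_mulVec]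
    have hUw : (U0 *ᵥ w) ⬝ᵥ (U0 *ᵥ w) = b := by rw [dot_mm, hU0, Matrix.one_mulVec]
    have hyw : y ⬝ᵥ (U0 *ᵥ w) = b := by
      rw [hydef, dot_mm, ← hMT, dot_mT, ← hwdef]
    have htb : t - b = (y - U0 *ᵥ w) ⬝ᵥ (y - U0 *ᵥ w) := by
      rw [sub_dotProduct, dotProduct_sub, dotProduct_sub, hyy, hyw, hUw,
        dotProduct_comm (U0 *ᵥ w) y, hyw]
      ring
    have hb_le_t : b ≤ t := by
      have := dot_self_nonneg (y - U0 *ᵥ w)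
      linarith [htb ▸ this]
    constructor
    · exact hb_le_t
    · have hΔy : Δ *ᵥ y = y - U0 *ᵥ w := by
        rw [hΔdef, Matrix.sub_mulVec]
        congr 1
        · rw [← Matrix.mulVec_mulVec (U *ᵥ v) U Uᵀ, Matrix.mulVec_mulVec v Uᵀ U, hU,
            Matrix.one_mulVec]
        · rw [← Matrix.mulVec_mulVec (U *ᵥ v) U0 U0ᵀ, Matrix.mulVec_mulVec v U0ᵀ U]
      have h := dot_sq_le Δ y
      rw [hΔy, hyy] at h
      calc t - b = (y - U0 *ᵥ w) ⬝ᵥ (y - U0 *ᵥ w) := htb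
        _ ≤ N ^ 2 * t := h
  -- Cauchy–Schwarz style bounds for M against v
  have hxw : ∀ v : Fin r → ℝ, v ⬝ᵥ (M *ᵥ v) ≤ v ⬝ᵥ v ∧ -(v ⬝ᵥ v) ≤ v ⬝ᵥ (M *ᵥ v) := by
    intro v
    have ht : (0:ℝ) ≤ v ⬝ᵥ v := dot_self_nonneg v
    have hsb : Real.sqrt ((M *ᵥ v) ⬝ᵥ (M *ᵥ v)) ≤ Real.sqrt (v ⬝ᵥ v) :=
      Real.sqrt_le_sqrt (hbt v).1
    have hst : Real.sqrt (v ⬝ᵥ v) * Real.sqrt (v ⬝ᵥ v) = v ⬝ᵥ v := Real.mul_self_sqrt ht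
    constructor
    · have h := dot_CS v (M *ᵥ v)
      nlinarith [Real.sqrt_nonneg (v ⬝ᵥ v)]
    · have h := dot_CS (-v) (M *ᵥ v)
      rw [neg_dotProduct, neg_dotProduct, dotProduct_neg, neg_neg] at h
      nlinarith [Real.sqrt_nonneg (v ⬝ᵥ v)]
  have hMδv : ∀ v : Fin r → ℝ, Mδ *ᵥ v = M *ᵥ v + δ • v := by
    intro v
    rw [hMδdef, Matrix.add_mulVec, Matrix.smul_mulVec, Matrix.one_mulVec]
  have hgexp : ∀ v : Fin r → ℝ, (Mδ *ᵥ v) ⬝ᵥ (Mδ *ᵥ v)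
      = (M *ᵥ v) ⬝ᵥ (M *ᵥ v) + 2 * δ * (v ⬝ᵥ (M *ᵥ v)) + δ ^ 2 * (v ⬝ᵥ v) := by
    intro v
    rw [hMδv v]
    simp only [dotProduct_add, add_dotProduct, dotProduct_smul,
      smul_dotProduct, smul_eq_mul]
    rw [dotProduct_comm (M *ᵥ v) v]
    ring
  have hg_ub : ∀ v : Fin r → ℝ, (Mδ *ᵥ v) ⬝ᵥ (Mδ *ᵥ v) ≤ (1 + δ) ^ 2 * (v ⬝ᵥ v) := by
    intro v
    rw [hgexp v]
    nlinarith [(hbt v).1, (hxw v).1, dot_self_nonneg v, hδ0.le]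
  have hg_lb : ∀ v : Fin r → ℝ,
      (M *ᵥ v) ⬝ᵥ (M *ᵥ v) - 2 * δ * (v ⬝ᵥ v) ≤ (Mδ *ᵥ v) ⬝ᵥ (Mδ *ᵥ v) := by
    intro v
    rw [hgexp v]
    nlinarith [(hxw v).2, dot_self_nonneg v, hδ0.le, sq_nonneg δ]
  -- quadratic form of P is at most (1+δ)
  have hPvPv : ∀ v : Fin r → ℝ, (P *ᵥ v) ⬝ᵥ (P *ᵥ v) = (Mδ *ᵥ v) ⬝ᵥ (Mδ *ᵥ v) := by
    intro v
    rw [dot_mm, hPT, hPP, ← dot_mm]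
  have hqP_le : ∀ v : Fin r → ℝ, v ⬝ᵥ (P *ᵥ v) ≤ (1 + δ) * (v ⬝ᵥ v) := by
    intro v
    have ht : (0:ℝ) ≤ v ⬝ᵥ v := dot_self_nonneg v
    have h := dot_CS v (P *ᵥ v)
    have h2 : Real.sqrt ((P *ᵥ v) ⬝ᵥ (P *ᵥ v)) ≤ (1 + δ) * Real.sqrt (v ⬝ᵥ v) := by
      rw [hPvPv v]
      calc Real.sqrt ((Mδ *ᵥ v) ⬝ᵥ (Mδ *ᵥ v)) ≤ Real.sqrt ((1 + δ) ^ 2 * (v ⬝ᵥ v)) :=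
            Real.sqrt_le_sqrt (hg_ub v)
        _ = (1 + δ) * Real.sqrt (v ⬝ᵥ v) := by
            rw [Real.sqrt_mul (sq_nonneg _), Real.sqrt_sq (by linarith : (0:ℝ) ≤ 1 + δ)]
    have hst : Real.sqrt (v ⬝ᵥ v) * Real.sqrt (v ⬝ᵥ v) = v ⬝ᵥ v := Real.mul_self_sqrt ht
    nlinarith [Real.sqrt_nonneg (v ⬝ᵥ v), Real.sqrt_nonneg ((P *ᵥ v) ⬝ᵥ (P *ᵥ v))]
  -- (1+δ)•P - P*P is PSD
  have psd2 : ((1 + δ) • (1 : Matrix (Fin r) (Fin r) ℝ) - P).PosSemidef := by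
    refine Matrix.PosSemidef.of_dotProduct_mulVec_nonneg ?_ ?_
    · show ((1 + δ) • (1 : Matrix (Fin r) (Fin r) ℝ) - P)ᴴ = _
      rw [Matrix.conjTranspose_eq_transpose_of_trivial, Matrix.transpose_sub,
        Matrix.transpose_smul, Matrix.transpose_one, hPT]
    · intro v
      have hsv : star v = v := by funext i; exact star_trivial _
      rw [hsv, Matrix.sub_mulVec, Matrix.smul_mulVec, Matrix.one_mulVec,
        dotProduct_sub, dotProduct_smul, smul_eq_mul]
      linarith [hqP_le v]
  set R := CFC.sqrt P with hRdef
  have hRR : R * R = P := CFC.sqrt_mul_sqrt_self _ psdP.nonneg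
  have hRT : Rᵀ = R := by
    rw [← Matrix.conjTranspose_eq_transpose_of_trivial]
    exact (CFC.sqrt_nonneg P).posSemidef.1
  have hRP : R * P * R = P * P := by
    rw [← hRR]
    simp only [← Matrix.mul_assoc]
  have psd3 : ((1 + δ) • P - P * P).PosSemidef := by
    have h := psd2.conjTranspose_mul_mul_same R
    have heq : Rᴴ * ((1 + δ) • (1 : Matrix (Fin r) (Fin r) ℝ) - P) * R
        = (1 + δ) • P - P * P := by
      rw [Matrix.conjTranspose_eq_transpose_of_trivial, hRT, Matrix.mul_sub, Matrix.sub_mul,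
        Matrix.mul_smul, Matrix.mul_one, Matrix.smul_mul, hRR, hRP]
    rwa [heq] at h
  -- the main pointwise bound for D
  have hmain : ∀ x : Fin r → ℝ,
      (D *ᵥ x) ⬝ᵥ (D *ᵥ x) ≤ (2 * N ^ 2 + 10 * δ) * (x ⬝ᵥ x) := by
    intro x
    have ht : (0:ℝ) ≤ x ⬝ᵥ x := dot_self_nonneg x
    have hqP0 : 0 ≤ x ⬝ᵥ (P *ᵥ x) := by
      have h := psdP.dotProduct_mulVec_nonneg x
      have hsv : star x = x := by funext i; exact star_trivial _
      rwa [hsv] at h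
    have hqPP : x ⬝ᵥ ((P * P) *ᵥ x) = (Mδ *ᵥ x) ⬝ᵥ (Mδ *ᵥ x) := by
      rw [hPP, ← dot_mm]
    have hpsd3x : 0 ≤ x ⬝ᵥ (((1 + δ) • P - P * P) *ᵥ x) := by
      have h := psd3.dotProduct_mulVec_nonneg x
      have hsv : star x = x := by funext i; exact star_trivial _
      rwa [hsv] at h
    rw [Matrix.sub_mulVec, dotProduct_sub, Matrix.smul_mulVec,
      dotProduct_smul, smul_eq_mul, hqPP] at hpsd3x
    have hqP_lb : (M *ᵥ x) ⬝ᵥ (M *ᵥ x) - 4 * δ * (x ⬝ᵥ x) ≤ x ⬝ᵥ (P *ᵥ x) := by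
      have h1 := hg_lb x
      have h2 := hqP_le x
      have h3 : δ * (x ⬝ᵥ (P *ᵥ x)) ≤ δ * ((1 + δ) * (x ⬝ᵥ x)) :=
        mul_le_mul_of_nonneg_left h2 hδ0.le
      have h4 : δ * ((1 + δ) * (x ⬝ᵥ x)) ≤ 2 * δ * (x ⬝ᵥ x) := by
        nlinarith [mul_nonneg (mul_nonneg hδ0.le (sub_nonneg.2 hδ1)) ht]
      linarith
    -- expand (D x)·(D x)
    have hDx : (D *ᵥ x) ⬝ᵥ (D *ᵥ x)
        = 2 * (x ⬝ᵥ x) - 2 * (x ⬝ᵥ (P *ᵥ x)) + δ * (x ⬝ᵥ (O *ᵥ x) + x ⬝ᵥ (Oᵀ *ᵥ x)) := by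
      rw [dot_mm, hGram]
      simp only [Matrix.add_mulVec, Matrix.sub_mulVec, Matrix.smul_mulVec,
        Matrix.one_mulVec, dotProduct_add, dotProduct_sub,
        dotProduct_smul, smul_eq_mul]
    have hOx : (O *ᵥ x) ⬝ᵥ (O *ᵥ x) = x ⬝ᵥ x := by rw [dot_mm, hOO, Matrix.one_mulVec]
    have hxO : x ⬝ᵥ (O *ᵥ x) ≤ x ⬝ᵥ x := by
      have h := dot_CS x (O *ᵥ x)
      rw [hOx] at h
      nlinarith [Real.mul_self_sqrt ht, Real.sqrt_nonneg (x ⬝ᵥ x)]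
    have hxOT : x ⬝ᵥ (Oᵀ *ᵥ x) = x ⬝ᵥ (O *ᵥ x) := by
      rw [dot_mT, dotProduct_comm]
    rw [hDx, hxOT]
    have hbt1 := (hbt x).2
    have h5 : δ * (x ⬝ᵥ (O *ᵥ x)) ≤ δ * (x ⬝ᵥ x) := mul_le_mul_of_nonneg_left hxO hδ0.le
    linarith [hqP_lb]
  -- conclude
  have hc0 : (0:ℝ) ≤ 2 * N ^ 2 + 10 * δ := by nlinarith [sq_nonneg N, hδ0.le]
  have hDle : ‖D‖ ≤ Real.sqrt (2 * N ^ 2 + 10 * δ) := by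
    refine opnorm_le (Real.sqrt_nonneg _) fun x => ?_
    rw [Real.sq_sqrt hc0]
    exact hmain x
  have hsq : 2 * N ^ 2 + 10 * δ ≤ (Real.sqrt 2 * N + ε) ^ 2 := by
    have h2 : Real.sqrt 2 ^ 2 = 2 := Real.sq_sqrt (by norm_num)
    nlinarith [hδε, mul_nonneg (mul_nonneg (Real.sqrt_nonneg 2) hN0) hε.le]
  have hfin : Real.sqrt (2 * N ^ 2 + 10 * δ) ≤ Real.sqrt 2 * N + ε := by
    calc Real.sqrt (2 * N ^ 2 + 10 * δ) ≤ Real.sqrt ((Real.sqrt 2 * N + ε) ^ 2) :=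
          Real.sqrt_le_sqrt hsq
      _ = Real.sqrt 2 * N + ε := Real.sqrt_sq (by positivity)
  calc (⨅ O' : Matrix.orthogonalGroup (Fin r) ℝ,
        ‖U - U0 * (O' : Matrix (Fin r) (Fin r) ℝ)‖)
      ≤ ‖U - U0 * ((⟨O, hOmem⟩ : Matrix.orthogonalGroup (Fin r) ℝ) :
          Matrix (Fin r) (Fin r) ℝ)‖ := ciInf_le hbdd _
    _ = ‖D‖ := rfl
    _ ≤ Real.sqrt (2 * N ^ 2 + 10 * δ) := hDle
    _ ≤ Real.sqrt 2 * N + ε := hfin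
end

section
/- Let H be a Hilbert space, let {φ_i}_{i∈I} and {φ̂_i}_{i∈I} be two finite orthonormal systems with |I| = m, and write G = (⟨φ_j, φ̂_k⟩)_{j,k∈I} ∈ ℝ^{m×m} with singular value decomposition G = AΣBᵀ. Let P̂ = ∑_{i∈I} φ̂_i φ̂_i* be the projection onto span{φ̂_i}. Then the smallest singular value σ_min of G satisfies σ_min² ≥ 1 − ‖(id − P̂)P‖², where P = ∑_{i∈I} φ_i φ_i*. -/
open scoped RealInnerProductSpace

section Aux

/-- In a nontrivial finite-dimensional normed space, the operator norm is attained
on the unit sphere. -/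
lemma aux_exists_unit_norm_opNorm {E F : Type*} [NormedAddCommGroup E] [NormedSpace ℝ E]
    [NormedAddCommGroup F] [NormedSpace ℝ F] [FiniteDimensional ℝ E] [Nontrivial E]
    (B : E →L[ℝ] F) : ∃ z : E, ‖z‖ = 1 ∧ ‖B z‖ = ‖B‖ := by
  have h1 : (Metric.sphere (0 : E) 1).Nonempty :=
    NormedSpace.sphere_nonempty.mpr zero_le_one
  have hc : IsCompact (Metric.sphere (0 : E) 1) := isCompact_sphere 0 1
  obtain ⟨z, hz, hmax⟩ := hc.exists_isMaxOn h1
    ((continuous_norm.comp B.continuous).continuousOn)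
  rw [mem_sphere_zero_iff_norm] at hz
  refine ⟨z, hz, le_antisymm (by simpa [hz] using B.le_opNorm z) ?_⟩
  apply B.opNorm_le_bound (norm_nonneg _)
  intro v
  rcases eq_or_ne v 0 with rfl | hv
  · simp
  · have hvn : ‖v‖ ≠ 0 := norm_ne_zero_iff.mpr hv
    have hmem : ‖v‖⁻¹ • v ∈ Metric.sphere (0 : E) 1 := by
      rw [mem_sphere_zero_iff_norm, norm_smul, norm_inv, norm_norm]
      field_simp
    have hb : ‖B (‖v‖⁻¹ • v)‖ ≤ ‖B z‖ := hmax hmem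
    rw [map_smul, norm_smul, norm_inv, norm_norm] at hb
    have h2 : ‖B v‖ ≤ ‖B z‖ * ‖v‖ := by
      have := mul_le_mul_of_nonneg_right hb (norm_nonneg v)
      calc ‖B v‖ = ‖v‖⁻¹ * ‖B v‖ * ‖v‖ := by field_simp
        _ ≤ ‖B z‖ * ‖v‖ := this
    exact h2

/-- In a finite-dimensional real inner product space, for any operator `T` and unit
vector `x`, there is a unit vector `y` with `‖T† y‖ ≤ ‖T x‖`. -/
lemma aux_exists_unit_adjoint_le {E : Type*} [NormedAddCommGroup E] [InnerProductSpace ℝ E]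
    [FiniteDimensional ℝ E] (T : E →L[ℝ] E) (x : E) (hx : ‖x‖ = 1) :
    ∃ y : E, ‖y‖ = 1 ∧ ‖ContinuousLinearMap.adjoint T y‖ ≤ ‖T x‖ := by
  have hx0 : x ≠ 0 := fun h => by simp [h] at hx
  have : Nontrivial E := nontrivial_of_ne x 0 hx0
  by_cases hinj : Function.Injective T
  · -- `T` is bijective
    have hbij : Function.Bijective (T : E →ₗ[ℝ] E) :=
      ⟨hinj, LinearMap.injective_iff_surjective.mp hinj⟩
    let e : E ≃ₗ[ℝ] E := LinearEquiv.ofBijective (T : E →ₗ[ℝ] E) hbij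
    let S : E →L[ℝ] E := LinearMap.toContinuousLinearMap (e.symm : E →ₗ[ℝ] E)
    have hST : S ∘L T = ContinuousLinearMap.id ℝ E := by
      ext v
      exact e.symm_apply_apply v
    have hadjST : ContinuousLinearMap.adjoint T ∘L ContinuousLinearMap.adjoint S =
        ContinuousLinearMap.id ℝ E := by
      rw [← ContinuousLinearMap.adjoint_comp, hST, ContinuousLinearMap.adjoint_id]
    have hSx : S (T x) = x := by
      have := congrArg (fun f : E →L[ℝ] E => f x) hST
      simpa using this
    have hS0 : 0 < ‖S‖ := by
      by_contra h
      push_neg at h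
      have : ‖S‖ = 0 := le_antisymm h (norm_nonneg _)
      have hS : S = 0 := by rwa [norm_eq_zero] at this
      rw [hS] at hSx
      simp at hSx
      exact hx0 hSx.symm
    have hTx : ‖S‖⁻¹ ≤ ‖T x‖ := by
      have h1 : (1 : ℝ) ≤ ‖S‖ * ‖T x‖ := by
        calc (1 : ℝ) = ‖x‖ := hx.symm
          _ = ‖S (T x)‖ := by rw [hSx]
          _ ≤ ‖S‖ * ‖T x‖ := S.le_opNorm _
      rw [inv_le_iff_one_le_mul₀ hS0]
      linarith [h1]
    obtain ⟨z, hz1, hz2⟩ := aux_exists_unit_norm_opNorm (ContinuousLinearMap.adjoint S)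
    have hSnorm : ‖ContinuousLinearMap.adjoint S‖ = ‖S‖ :=
      LinearIsometryEquiv.norm_map (ContinuousLinearMap.adjoint (𝕜 := ℝ) (E := E) (F := E)) S
    set w := ContinuousLinearMap.adjoint S z with hw
    have hwn : ‖w‖ = ‖S‖ := by rw [hw, hz2, hSnorm]
    have hw0 : w ≠ 0 := by
      intro h
      rw [h, norm_zero] at hwn
      exact hS0.ne hwn
    have hTw : ContinuousLinearMap.adjoint T w = z := by
      have := congrArg (fun f : E →L[ℝ] E => f z) hadjST
      simpa using this
    refine ⟨‖S‖⁻¹ • w, ?_, ?_⟩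
    · rw [norm_smul, norm_inv, norm_norm, hwn]
      field_simp
    · rw [map_smul, hTw, norm_smul, norm_inv, norm_norm, hz1, mul_one]
      exact hTx
  · -- `T` is not injective, so `T†` has a kernel vector
    have hnsurj : ¬Function.Surjective (T : E →ₗ[ℝ] E) := by
      intro h
      exact hinj (LinearMap.injective_iff_surjective.mpr h)
    have hrange : LinearMap.range (T : E →ₗ[ℝ] E) ≠ ⊤ := by
      rwa [Ne, LinearMap.range_eq_top]
    have horth : (LinearMap.range (T : E →ₗ[ℝ] E))ᗮ ≠ ⊥ := by
      intro h
      exact hrange (Submodule.orthogonal_eq_bot_iff.mp h)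
    obtain ⟨y, hy_mem, hy0⟩ := Submodule.exists_mem_ne_zero_of_ne_bot horth
    have hTy : ContinuousLinearMap.adjoint T y = 0 := by
      have h : ∀ v : E, ⟪ContinuousLinearMap.adjoint T y, v⟫ = 0 := by
        intro v
        rw [ContinuousLinearMap.adjoint_inner_left, real_inner_comm]
        exact (Submodule.mem_orthogonal _ _).mp hy_mem (T v) (LinearMap.mem_range_self _ v)
      have := h (ContinuousLinearMap.adjoint T y)
      rwa [real_inner_self_eq_norm_sq, pow_eq_zero_iff (by norm_num), norm_eq_zero] at this
    have hyn : ‖y‖ ≠ 0 := norm_ne_zero_iff.mpr hy0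
    refine ⟨‖y‖⁻¹ • y, ?_, ?_⟩
    · rw [norm_smul, norm_inv, norm_norm]
      field_simp
    · rw [map_smul, hTy, smul_zero, norm_zero]
      exact norm_nonneg _

end Aux

/-- Let `φ` and `ψ` be two orthonormal systems of size `m` in a real Hilbert space `H`,
`G = (⟪φ_j, ψ_k⟫)_{j,k}` the Gram matrix, `P` and `Q` the orthogonal projections onto their
spans. Then the smallest singular value `σ_min` of `G` satisfies
`σ_min² ≥ 1 − ‖(id − Q)P‖²` (stated as: `‖Gx‖² ≥ 1 − ‖(id − Q)P‖²` for every unit `x`). -/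
theorem gram_smallest_singular_value_bound
    {H : Type*} [NormedAddCommGroup H] [InnerProductSpace ℝ H] [CompleteSpace H]
    {m : ℕ} (φ ψ : Fin m → H)
    (hφ : Orthonormal ℝ φ) (hψ : Orthonormal ℝ ψ)
    (G : Matrix (Fin m) (Fin m) ℝ)
    (hG : ∀ j k, G j k = ⟪φ j, ψ k⟫)
    (P Q : H →L[ℝ] H)
    (hP : P = ∑ i, (innerSL ℝ (φ i)).smulRight (φ i))
    (hQ : Q = ∑ i, (innerSL ℝ (ψ i)).smulRight (ψ i))
    (x : Fin m → ℝ) (hx : ∑ i, x i ^ 2 = 1) :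
    1 - ‖((1 : H →L[ℝ] H) - Q) * P‖ ^ 2 ≤ ∑ j, (G.mulVec x j) ^ 2 := by
  classical
  let T : EuclideanSpace ℝ (Fin m) →L[ℝ] EuclideanSpace ℝ (Fin m) :=
    LinearMap.toContinuousLinearMap (Matrix.toEuclideanLin G)
  let T' : EuclideanSpace ℝ (Fin m) →L[ℝ] EuclideanSpace ℝ (Fin m) :=
    LinearMap.toContinuousLinearMap (Matrix.toEuclideanLin G.transpose)
  have hTapp : ∀ (v : EuclideanSpace ℝ (Fin m)) (k : Fin m), T v k = ∑ j, G k j * v j := by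
    intro v k
    rfl
  have hT'app : ∀ (v : EuclideanSpace ℝ (Fin m)) (k : Fin m), T' v k = ∑ j, G j k * v j := by
    intro v k
    rfl
  have hnormsq : ∀ v : EuclideanSpace ℝ (Fin m), ‖v‖ ^ 2 = ∑ i, v i ^ 2 := by
    intro v
    rw [← real_inner_self_eq_norm_sq]
    simp only [PiLp.inner_apply, RCLike.inner_apply, conj_trivial, sq]
  -- `T'` is the adjoint of `T`
  have hadj : ContinuousLinearMap.adjoint T = T' := by
    symm
    rw [ContinuousLinearMap.eq_adjoint_iff]
    intro a b
    simp only [PiLp.inner_apply, RCLike.inner_apply, starRingEnd_apply, star_trivial]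
    rw [show (∑ x, b x * T' a x) = ∑ x, T' a x * b x from Finset.sum_congr rfl fun _ _ => mul_comm _ _,
      show (∑ x, T b x * a x) = ∑ x, a x * T b x from Finset.sum_congr rfl fun _ _ => mul_comm _ _]
    have : ∀ k, T' a k * b k = ∑ j, G j k * a j * b k := by
      intro k; rw [hT'app, Finset.sum_mul]
    rw [Finset.sum_congr rfl fun k _ => this k]
    have : ∀ j, a j * T b j = ∑ k, a j * (G j k * b k) := by
      intro j; rw [hTapp, Finset.mul_sum]
    rw [Finset.sum_congr rfl fun j _ => this j, Finset.sum_comm]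
    apply Finset.sum_congr rfl
    intro k _
    apply Finset.sum_congr rfl
    intro j _
    ring
  -- the unit vector `x` in `E`
  let xE : EuclideanSpace ℝ (Fin m) := (WithLp.equiv 2 (Fin m → ℝ)).symm x
  have hxE : ‖xE‖ = 1 := by
    have h := hnormsq xE
    have hx' : ∑ i, xE i ^ 2 = 1 := hx
    rw [hx'] at h
    nlinarith [norm_nonneg xE]
  obtain ⟨y, hy1, hy2⟩ := aux_exists_unit_adjoint_le T xE hxE
  rw [hadj] at hy2
  -- the vector `u = ∑ y j • φ j` in `H`
  set u : H := ∑ j, y j • φ j with hu_def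
  have hcoef : ∀ i, ⟪φ i, u⟫ = y i := fun i => hφ.inner_right_fintype y i
  have hu_norm_sq : ‖u‖ ^ 2 = 1 := by
    rw [← real_inner_self_eq_norm_sq, hu_def, sum_inner]
    have : ∀ i, ⟪y i • φ i, u⟫ = y i ^ 2 := by
      intro i
      rw [real_inner_smul_left, hcoef, sq]
    rw [Finset.sum_congr rfl fun i _ => this i]
    have := hnormsq y
    rw [hy1] at this
    simpa using this.symm
  have hu_norm : ‖u‖ = 1 := by nlinarith [norm_nonneg u]
  -- `P u = u`
  have hPu : P u = u := by
    rw [hP, ContinuousLinearMap.sum_apply]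
    simp only [ContinuousLinearMap.smulRight_apply, innerSL_apply_apply]
    rw [hu_def]
    exact Finset.sum_congr rfl fun i _ => by rw [hcoef]
  -- coefficients of `Q u`
  have hpsi_coef : ∀ k, ⟪ψ k, u⟫ = T' y k := by
    intro k
    rw [hT'app, hu_def, inner_sum]
    apply Finset.sum_congr rfl
    intro j _
    rw [real_inner_smul_right, real_inner_comm, ← hG]
    ring
  have hQu : Q u = ∑ k, T' y k • ψ k := by
    rw [hQ, ContinuousLinearMap.sum_apply]
    simp only [ContinuousLinearMap.smulRight_apply, innerSL_apply_apply]
    exact Finset.sum_congr rfl fun k _ => by rw [hpsi_coef]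
  have hQu_norm_sq : ‖Q u‖ ^ 2 = ‖T' y‖ ^ 2 := by
    rw [hQu, ← real_inner_self_eq_norm_sq, sum_inner]
    have : ∀ k, ⟪T' y k • ψ k, ∑ l, T' y l • ψ l⟫ = T' y k ^ 2 := by
      intro k
      rw [real_inner_smul_left, hψ.inner_right_fintype, sq]
    rw [Finset.sum_congr rfl fun k _ => this k, hnormsq]
  have hinner_uQu : ⟪u, Q u⟫ = ‖Q u‖ ^ 2 := by
    rw [hQu, inner_sum, ← real_inner_self_eq_norm_sq, sum_inner]
    apply Finset.sum_congr rfl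
    intro k _
    rw [real_inner_smul_right, real_inner_smul_left, hψ.inner_right_fintype]
    rw [real_inner_comm (ψ k) u, hpsi_coef]
  -- `‖u - Q u‖² = 1 - ‖Q u‖²`
  have hsub : ‖u - Q u‖ ^ 2 = 1 - ‖Q u‖ ^ 2 := by
    rw [@norm_sub_sq_real, hinner_uQu, hu_norm_sq]
    ring
  -- the operator norm bound
  have hop : ‖u - Q u‖ ≤ ‖((1 : H →L[ℝ] H) - Q) * P‖ := by
    have happ : (((1 : H →L[ℝ] H) - Q) * P) u = u - Q u := by
      simp [ContinuousLinearMap.mul_apply, hPu]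
    calc ‖u - Q u‖ = ‖(((1 : H →L[ℝ] H) - Q) * P) u‖ := by rw [happ]
      _ ≤ ‖((1 : H →L[ℝ] H) - Q) * P‖ * ‖u‖ := ContinuousLinearMap.le_opNorm _ _
      _ = ‖((1 : H →L[ℝ] H) - Q) * P‖ := by rw [hu_norm, mul_one]
  have hop_sq : 1 - ‖Q u‖ ^ 2 ≤ ‖((1 : H →L[ℝ] H) - Q) * P‖ ^ 2 := by
    rw [← hsub]
    exact pow_le_pow_left₀ (norm_nonneg _) hop 2
  -- conclude
  have hfinal : ‖T xE‖ ^ 2 = ∑ j, (G.mulVec x j) ^ 2 := by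
    rw [hnormsq]
    apply Finset.sum_congr rfl
    intro j _
    rw [hTapp]
    rfl
  have hchain : 1 - ‖((1 : H →L[ℝ] H) - Q) * P‖ ^ 2 ≤ ‖T' y‖ ^ 2 := by
    rw [← hQu_norm_sq]
    linarith [hop_sq]
  calc 1 - ‖((1 : H →L[ℝ] H) - Q) * P‖ ^ 2 ≤ ‖T' y‖ ^ 2 := hchain
    _ ≤ ‖T xE‖ ^ 2 := pow_le_pow_left₀ (norm_nonneg _) hy2 2
    _ = ∑ j, (G.mulVec x j) ^ 2 := hfinal
end
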